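/- arXiv:2404.10489 — 5 statements merged into one kernel-verified Lean document; each statement's English description precedes it below -/
import Mathlib

section
/- For every integer n ≥ 0 and every real t, the quantity 𝓘ₙ(t) = ∫₀^∞ Heₙ(ω) e^{−ω²/2} e^{itω} dω satisfies |𝓘ₙ(t)| ≤ √(π/2) · 2^{n/2} · Γ(1 + n/2). -/
open MeasureTheory

/-- Probabilists' Hermite polynomial `Heₙ(x) = (−1)ⁿ e^{x²/2} dⁿ/dxⁿ e^{−x²/2}`. -/
noncomputable def He (n : ℕ) (x : ℝ) : ℝ :=
  (-1) ^ n * Real.exp (x ^ 2 / 2) * iteratedDeriv n (fun y => Real.exp (-(y ^ 2) / 2)) x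

/-- `𝓘ₙ(t) = ∫₀^∞ Heₙ(ω) e^{−ω²/2} e^{itω} dω`. -/
noncomputable def calI (n : ℕ) (t : ℝ) : ℂ :=
  ∫ ω in Set.Ioi (0 : ℝ),
    (He n ω : ℂ) * Complex.exp (-(ω : ℂ) ^ 2 / 2) * Complex.exp (Complex.I * (t : ℂ) * (ω : ℂ))

namespace HBAux

open MeasureTheory Filter Set Polynomial

lemma gauss_int : Integrable (fun z : ℝ => Real.exp (-z ^ 2 / 2)) := by
  have h := integrable_exp_neg_mul_sq (show (0:ℝ) < 1/2 by norm_num)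
  have : (fun z : ℝ => Real.exp (-z ^ 2 / 2)) = fun z : ℝ => Real.exp (-(1/2) * z ^ 2) := by
    funext z; ring_nf
  rw [this]; exact h

lemma abs_pow_gauss_int (j : ℕ) :
    Integrable (fun z : ℝ => |z| ^ j * Real.exp (-z ^ 2 / 2)) := by
  have h := integrable_rpow_mul_exp_neg_mul_sq (show (0:ℝ) < 1/2 by norm_num)
      (show (-1:ℝ) < j from lt_of_lt_of_le neg_one_lt_zero (Nat.cast_nonneg j))
  have h2 := h.abs
  have : (fun z : ℝ => |z ^ (j:ℝ) * Real.exp (-(1/2) * z ^ 2)|)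
      = fun z : ℝ => |z| ^ j * Real.exp (-z ^ 2 / 2) := by
    funext z
    rw [abs_mul, Real.rpow_natCast, abs_pow, abs_of_nonneg (Real.exp_pos _).le]
    ring_nf
  rwa [this] at h2

lemma norm_aux (x z : ℝ) (k : ℕ) :
    ‖((x:ℂ) + z * Complex.I) ^ k * (Real.exp (-z ^ 2 / 2) : ℂ)‖
      = Real.sqrt (x ^ 2 + z ^ 2) ^ k * Real.exp (-z ^ 2 / 2) := by
  rw [norm_mul, norm_pow, Complex.norm_add_mul_I,
    Complex.norm_real, Real.norm_eq_abs, abs_of_nonneg (Real.exp_pos _).le]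

lemma sqrt_le_abs_add (x z : ℝ) : Real.sqrt (x ^ 2 + z ^ 2) ≤ |x| + |z| := by
  have h : x ^ 2 + z ^ 2 ≤ (|x| + |z|) ^ 2 := by
    nlinarith [abs_nonneg x, abs_nonneg z, sq_abs x, sq_abs z]
  calc Real.sqrt (x ^ 2 + z ^ 2) ≤ Real.sqrt ((|x| + |z|) ^ 2) := Real.sqrt_le_sqrt h
  _ = |x| + |z| := Real.sqrt_sq (by positivity)

lemma bound_aux (x z : ℝ) (k : ℕ) :
    Real.sqrt (x ^ 2 + z ^ 2) ^ k ≤ 2 ^ k * (|x| ^ k + |z| ^ k) := by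
  calc Real.sqrt (x ^ 2 + z ^ 2) ^ k ≤ (|x| + |z|) ^ k :=
        pow_le_pow_left₀ (Real.sqrt_nonneg _) (sqrt_le_abs_add x z) k
  _ ≤ 2 ^ (k - 1) * (|x| ^ k + |z| ^ k) := add_pow_le (abs_nonneg x) (abs_nonneg z) k
  _ ≤ 2 ^ k * (|x| ^ k + |z| ^ k) := by
      apply mul_le_mul_of_nonneg_right (pow_le_pow_right₀ one_le_two (Nat.sub_le k 1))
      positivity

lemma intD (x : ℝ) (k : ℕ) :
    Integrable (fun z : ℝ => 2 ^ k * (|x| ^ k + |z| ^ k) * Real.exp (-z ^ 2 / 2)) := by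
  have : (fun z : ℝ => 2 ^ k * (|x| ^ k + |z| ^ k) * Real.exp (-z ^ 2 / 2))
      = fun z : ℝ => (2 ^ k * |x| ^ k) * Real.exp (-z ^ 2 / 2)
          + 2 ^ k * (|z| ^ k * Real.exp (-z ^ 2 / 2)) := by
    funext z; ring
  rw [this]
  exact (gauss_int.const_mul _).add ((abs_pow_gauss_int k).const_mul _)

lemma intA (x : ℝ) (k : ℕ) :
    Integrable (fun z : ℝ => ((x:ℂ) + z * Complex.I) ^ k * (Real.exp (-z ^ 2 / 2) : ℂ)) := by
  refine (intD x k).mono' ?_ ?_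
  · apply Continuous.aestronglyMeasurable; fun_prop
  · refine Eventually.of_forall fun z => ?_
    rw [norm_aux]
    exact mul_le_mul_of_nonneg_right (bound_aux x z k) (Real.exp_pos _).le

lemma abs_mul_pow_le (x z : ℝ) (k : ℕ) :
    |z| * Real.sqrt (x ^ 2 + z ^ 2) ^ k ≤ Real.sqrt (x ^ 2 + z ^ 2) ^ (k + 1) := by
  have hz : |z| ≤ Real.sqrt (x ^ 2 + z ^ 2) := by
    rw [← Real.sqrt_sq_eq_abs]
    exact Real.sqrt_le_sqrt (by nlinarith [sq_nonneg x])
  calc |z| * Real.sqrt (x ^ 2 + z ^ 2) ^ k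
      ≤ Real.sqrt (x ^ 2 + z ^ 2) * Real.sqrt (x ^ 2 + z ^ 2) ^ k :=
        mul_le_mul_of_nonneg_right hz (by positivity)
    _ = Real.sqrt (x ^ 2 + z ^ 2) ^ (k + 1) := by ring

lemma intB (x : ℝ) (k : ℕ) :
    Integrable (fun z : ℝ =>
      (z:ℂ) * ((x:ℂ) + z * Complex.I) ^ k * (Real.exp (-z ^ 2 / 2) : ℂ)) := by
  refine (intD x (k + 1)).mono' ?_ ?_
  · apply Continuous.aestronglyMeasurable; fun_prop
  · refine Eventually.of_forall fun z => ?_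
    rw [mul_assoc, norm_mul, norm_aux, Complex.norm_real, Real.norm_eq_abs, ← mul_assoc]
    refine mul_le_mul_of_nonneg_right ?_ (Real.exp_pos _).le
    exact (abs_mul_pow_le x z k).trans (bound_aux x z (k + 1))


lemma T_top (j : ℕ) :
    Tendsto (fun z : ℝ => |z| ^ j * Real.exp (-z ^ 2 / 2)) atTop (nhds 0) := by
  have key : Tendsto (fun z : ℝ => z ^ j * Real.exp (-z)) atTop (nhds 0) :=
    Real.tendsto_pow_mul_exp_neg_atTop_nhds_zero j
  refine squeeze_zero' ?_ ?_ key
  · filter_upwards [eventually_ge_atTop (0:ℝ)] with z hz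
    positivity
  · filter_upwards [eventually_ge_atTop (2:ℝ)] with z hz
    rw [abs_of_nonneg (by linarith)]
    refine mul_le_mul_of_nonneg_left ?_ (by positivity)
    exact Real.exp_le_exp.mpr (by nlinarith)

lemma T_bot (j : ℕ) :
    Tendsto (fun z : ℝ => |z| ^ j * Real.exp (-z ^ 2 / 2)) atBot (nhds 0) := by
  have h := (T_top j).comp tendsto_neg_atBot_atTop
  simpa [Function.comp_def, abs_neg, neg_pow] using h

lemma D_tend (x : ℝ) (k : ℕ) (l : Filter ℝ)
    (h0 : Tendsto (fun z : ℝ => |z| ^ 0 * Real.exp (-z ^ 2 / 2)) l (nhds 0))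
    (hk : Tendsto (fun z : ℝ => |z| ^ k * Real.exp (-z ^ 2 / 2)) l (nhds 0)) :
    Tendsto (fun z : ℝ => 2 ^ k * (|x| ^ k + |z| ^ k) * Real.exp (-z ^ 2 / 2)) l (nhds 0) := by
  have := ((h0.const_mul ((2:ℝ) ^ k * |x| ^ k)).add (hk.const_mul ((2:ℝ) ^ k)))
  simp only [mul_zero, add_zero] at this
  refine this.congr fun z => ?_
  simp only [pow_zero, one_mul]; ring

lemma F_tend_top (x : ℝ) (k : ℕ) :
    Tendsto (fun z : ℝ => ((x:ℂ) + z * Complex.I) ^ k * (Real.exp (-z ^ 2 / 2) : ℂ))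
      atTop (nhds 0) := by
  refine squeeze_zero_norm (fun z => ?_) (D_tend x k atTop (T_top 0) (T_top k))
  rw [norm_aux]
  exact mul_le_mul_of_nonneg_right (bound_aux x z k) (Real.exp_pos _).le

lemma F_tend_bot (x : ℝ) (k : ℕ) :
    Tendsto (fun z : ℝ => ((x:ℂ) + z * Complex.I) ^ k * (Real.exp (-z ^ 2 / 2) : ℂ))
      atBot (nhds 0) := by
  refine squeeze_zero_norm (fun z => ?_) (D_tend x k atBot (T_bot 0) (T_bot k))
  rw [norm_aux]
  exact mul_le_mul_of_nonneg_right (bound_aux x z k) (Real.exp_pos _).le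

lemma integral_deriv_zero (F F' : ℝ → ℂ) (hF : ∀ z, HasDerivAt F (F' z) z)
    (hint : Integrable F') (htop : Tendsto F atTop (nhds 0))
    (hbot : Tendsto F atBot (nhds 0)) : ∫ z : ℝ, F' z = 0 := by
  have h1 : ∫ z in Iic (0:ℝ), F' z = F 0 - 0 :=
    integral_Iic_of_hasDerivAt_of_tendsto' (fun z _ => hF z) hint.integrableOn hbot
  have h2 : ∫ z in Ioi (0:ℝ), F' z = 0 - F 0 :=
    integral_Ioi_of_hasDerivAt_of_tendsto' (fun z _ => hF z) hint.integrableOn htop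
  have h3 := intervalIntegral.integral_Iic_add_Ioi (b := (0:ℝ)) (f := F')
      hint.integrableOn hint.integrableOn
  rw [← h3, h1, h2]; ring

lemma hpow (x : ℝ) : ∀ (m : ℕ) (z : ℝ),
    HasDerivAt (fun z : ℝ => ((x:ℂ) + z * Complex.I) ^ m)
      ((m:ℂ) * ((x:ℂ) + z * Complex.I) ^ (m - 1) * Complex.I) z := by
  intro m
  induction m with
  | zero => intro z; simpa using hasDerivAt_const z (1:ℂ)
  | succ m ih =>
    intro z
    have hz : HasDerivAt (fun z : ℝ => ((z:ℝ):ℂ)) 1 z := by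
      simpa using (hasDerivAt_id z).ofReal_comp
    have h1 : HasDerivAt (fun z : ℝ => (x:ℂ) + z * Complex.I) Complex.I z := by
      simpa using ((hz.mul_const Complex.I).const_add (x:ℂ))
    have h2 := (ih z).mul h1
    have heq : (fun z : ℝ => ((x:ℂ) + z * Complex.I) ^ (m + 1))
        = fun z : ℝ => ((x:ℂ) + z * Complex.I) ^ m * ((x:ℂ) + z * Complex.I) := by
      funext z; rw [pow_succ]
    rw [heq]
    refine h2.congr_deriv ?_
    symm
    rcases m with - | m
    · simp
    · simp only [Nat.add_sub_cancel]
      push_cast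
      rw [pow_succ]
      ring

lemma hasDeriv_aux (x : ℝ) (k : ℕ) (z : ℝ) :
    HasDerivAt (fun z : ℝ => ((x:ℂ) + z * Complex.I) ^ (k+1) * (Real.exp (-z ^ 2 / 2) : ℂ))
      (((k:ℂ)+1) * Complex.I * ((x:ℂ) + z * Complex.I) ^ k * (Real.exp (-z ^ 2 / 2) : ℂ)
        - (z:ℂ) * ((x:ℂ) + z * Complex.I) ^ (k+1) * (Real.exp (-z ^ 2 / 2) : ℂ)) z := by
  have hr : HasDerivAt (fun z : ℝ => Real.exp (-z ^ 2 / 2)) (-z * Real.exp (-z ^ 2 / 2)) z := by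
    have h := (((hasDerivAt_pow 2 z).div_const 2).neg).exp
    convert h using 1
    · funext w; simp only [Pi.neg_apply]; ring_nf
    · rw [pow_one]; simp only [Pi.neg_apply]; ring_nf
  have h3 := hr.ofReal_comp
  have h4 := (hpow x (k+1) z).mul h3
  refine h4.congr_deriv ?_
  symm
  simp only [Nat.add_sub_cancel]
  push_cast
  ring


lemma parts (x : ℝ) (k : ℕ) :
    ∫ z : ℝ, (z:ℂ) * ((x:ℂ) + z * Complex.I) ^ (k+1) * (Real.exp (-z ^ 2 / 2) : ℂ)
      = ((k:ℂ)+1) * Complex.I *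
        ∫ z : ℝ, ((x:ℂ) + z * Complex.I) ^ k * (Real.exp (-z ^ 2 / 2) : ℂ) := by
  have hint : Integrable (fun z : ℝ =>
      ((k:ℂ)+1) * Complex.I * ((x:ℂ) + z * Complex.I) ^ k * (Real.exp (-z ^ 2 / 2) : ℂ)
        - (z:ℂ) * ((x:ℂ) + z * Complex.I) ^ (k+1) * (Real.exp (-z ^ 2 / 2) : ℂ)) := by
    have h1 : Integrable (fun z : ℝ =>
        ((k:ℂ)+1) * Complex.I * (((x:ℂ) + z * Complex.I) ^ k * (Real.exp (-z ^ 2 / 2) : ℂ))) :=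
      (intA x k).const_mul _
    refine (h1.congr ?_).sub (intB x (k+1))
    exact Eventually.of_forall fun z => by ring
  have h0 := integral_deriv_zero _ _ (hasDeriv_aux x k) hint (F_tend_top x (k+1))
      (F_tend_bot x (k+1))
  have h1 : Integrable (fun z : ℝ =>
      ((k:ℂ)+1) * Complex.I * (((x:ℂ) + z * Complex.I) ^ k * (Real.exp (-z ^ 2 / 2) : ℂ))) :=
    (intA x k).const_mul _
  rw [integral_sub (h1.congr (Eventually.of_forall fun z => by ring)) (intB x (k+1))] at h0
  have h2 : ∫ z : ℝ, ((k:ℂ)+1) * Complex.I * ((x:ℂ) + z * Complex.I) ^ k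
      * (Real.exp (-z ^ 2 / 2) : ℂ)
      = ((k:ℂ)+1) * Complex.I * ∫ z : ℝ, ((x:ℂ) + z * Complex.I) ^ k
        * (Real.exp (-z ^ 2 / 2) : ℂ) := by
    rw [← integral_const_mul]
    congr 1; funext z; ring
  rw [h2] at h0
  exact (sub_eq_zero.mp h0).symm

lemma gauss_rval : ∫ z : ℝ, Real.exp (-z ^ 2 / 2) = Real.sqrt (2 * Real.pi) := by
  have h := integral_gaussian (1/2 : ℝ)
  have e1 : (fun z : ℝ => Real.exp (-(1/2) * z ^ 2)) = fun z : ℝ => Real.exp (-z ^ 2 / 2) := by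
    funext z; ring_nf
  rw [e1] at h
  rw [h]
  congr 1
  rw [div_div_eq_mul_div, div_one]
  ring

lemma gauss_cval : ∫ z : ℝ, (Real.exp (-z ^ 2 / 2) : ℂ) = (Real.sqrt (2 * Real.pi) : ℂ) := by
  have h0 : ∫ z : ℝ, (Real.exp (-z ^ 2 / 2) : ℂ) = ((∫ z : ℝ, Real.exp (-z ^ 2 / 2) : ℝ) : ℂ) :=
    integral_ofReal
  rw [h0, gauss_rval]

lemma parts0 : ∫ z : ℝ, (z:ℂ) * (Real.exp (-z ^ 2 / 2) : ℂ) = 0 := by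
  have hd : ∀ z : ℝ, HasDerivAt (fun z : ℝ => (-(Real.exp (-z ^ 2 / 2)) : ℂ))
      ((z:ℂ) * (Real.exp (-z ^ 2 / 2) : ℂ)) z := by
    intro z
    have hr : HasDerivAt (fun z : ℝ => Real.exp (-z ^ 2 / 2)) (-z * Real.exp (-z ^ 2 / 2)) z := by
      have h := (((hasDerivAt_pow 2 z).div_const 2).neg).exp
      convert h using 1
      · funext w; simp only [Pi.neg_apply]; ring_nf
      · rw [pow_one]; simp only [Pi.neg_apply]; ring_nf
    have := hr.ofReal_comp.neg
    refine this.congr_deriv ?_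
    symm
    push_cast; ring
  have hint : Integrable (fun z : ℝ => (z:ℂ) * (Real.exp (-z ^ 2 / 2) : ℂ)) := by
    have := intB 0 0
    refine this.congr (Eventually.of_forall fun z => by simp)
  refine integral_deriv_zero _ _ hd hint ?_ ?_
  · have := (F_tend_top 0 0).neg
    simpa using this
  · have := (F_tend_bot 0 0).neg
    simpa using this

lemma deriv_hermite : ∀ n : ℕ, derivative (hermite (n+1)) = ((n:ℤ[X])+1) * hermite n := by
  intro n
  induction n with
  | zero => simp [hermite_one, hermite_zero]
  | succ n ih =>
    have hd : derivative (((n:ℤ[X])+1) * hermite n) = ((n:ℤ[X])+1) * derivative (hermite n) := by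
      rw [derivative_mul]
      simp
    rw [hermite_succ (n+1), derivative_sub, derivative_mul, derivative_X, one_mul, ih, hd]
    calc hermite (n+1) + X * (((n:ℤ[X])+1) * hermite n) - ((n:ℤ[X])+1) * derivative (hermite n)
        = hermite (n+1) + ((n:ℤ[X])+1) * (X * hermite n - derivative (hermite n)) := by ring
      _ = (((n+1:ℕ):ℤ[X])+1) * hermite (n+1) := by rw [← hermite_succ n]; push_cast; ring

lemma aeval_hermite_rec (n : ℕ) (x : ℝ) :
    (aeval x (hermite (n+2)) : ℝ)
      = x * aeval x (hermite (n+1)) - ((n:ℝ)+1) * aeval x (hermite n) := by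
  rw [hermite_succ (n+1), map_sub, map_mul, aeval_X, deriv_hermite, map_mul]
  simp

lemma J_pair (x : ℝ) : ∀ n : ℕ,
    (∫ z : ℝ, ((x:ℂ) + z * Complex.I) ^ n * (Real.exp (-z ^ 2 / 2) : ℂ)
      = (Real.sqrt (2 * Real.pi) : ℂ) * ((aeval x (hermite n) : ℝ) : ℂ))
    ∧ (∫ z : ℝ, ((x:ℂ) + z * Complex.I) ^ (n+1) * (Real.exp (-z ^ 2 / 2) : ℂ)
      = (Real.sqrt (2 * Real.pi) : ℂ) * ((aeval x (hermite (n+1)) : ℝ) : ℂ)) := by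
  have intE : Integrable (fun z : ℝ => (Real.exp (-z ^ 2 / 2) : ℂ)) :=
    (intA 0 0).congr (Filter.Eventually.of_forall fun z => by simp)
  have intE2 : Integrable (fun z : ℝ => (z:ℂ) * (Real.exp (-z ^ 2 / 2) : ℂ)) :=
    (intB 0 0).congr (Filter.Eventually.of_forall fun z => by simp)
  have J0 : ∫ z : ℝ, ((x:ℂ) + z * Complex.I) ^ 0 * (Real.exp (-z ^ 2 / 2) : ℂ)
      = (Real.sqrt (2 * Real.pi) : ℂ) * ((aeval x (hermite 0) : ℝ) : ℂ) := by
    simp only [pow_zero, one_mul, hermite_zero, map_one]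
    rw [gauss_cval]; push_cast; ring
  have J1 : ∫ z : ℝ, ((x:ℂ) + z * Complex.I) ^ 1 * (Real.exp (-z ^ 2 / 2) : ℂ)
      = (Real.sqrt (2 * Real.pi) : ℂ) * ((aeval x (hermite 1) : ℝ) : ℂ) := by
    have decomp : (fun z : ℝ => ((x:ℂ) + z * Complex.I) ^ 1 * (Real.exp (-z ^ 2 / 2) : ℂ))
        = fun z : ℝ => (x:ℂ) * (Real.exp (-z ^ 2 / 2) : ℂ)
          + ((z:ℂ) * (Real.exp (-z ^ 2 / 2) : ℂ)) * Complex.I := by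
      funext z; ring
    rw [decomp, integral_add (intE.const_mul _) (intE2.mul_const _), integral_const_mul,
      integral_mul_const, gauss_cval, parts0, hermite_one, aeval_X]
    ring
  intro n
  induction n with
  | zero => exact ⟨J0, J1⟩
  | succ n ih =>
    refine ⟨ih.2, ?_⟩
    have decomp : (fun z : ℝ => ((x:ℂ) + z * Complex.I) ^ (n+2) * (Real.exp (-z ^ 2 / 2) : ℂ))
        = fun z : ℝ => (x:ℂ) * (((x:ℂ) + z * Complex.I) ^ (n+1) * (Real.exp (-z ^ 2 / 2) : ℂ))
          + ((z:ℂ) * ((x:ℂ) + z * Complex.I) ^ (n+1) * (Real.exp (-z ^ 2 / 2) : ℂ))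
            * Complex.I := by
      funext z; ring
    rw [decomp, integral_add ((intA x (n+1)).const_mul _) ((intB x (n+1)).mul_const _),
      integral_const_mul, integral_mul_const, parts x n, ih.1, ih.2, aeval_hermite_rec n x]
    have hI : Complex.I * Complex.I = -1 := Complex.I_mul_I
    push_cast
    linear_combination (Real.sqrt (2 * Real.pi) : ℂ) * ((n:ℂ)+1) * ((aeval x (hermite n) : ℝ) : ℂ) * hI

lemma J_eq (n : ℕ) (x : ℝ) :
    ∫ z : ℝ, ((x:ℂ) + z * Complex.I) ^ n * (Real.exp (-z ^ 2 / 2) : ℂ)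
      = (Real.sqrt (2 * Real.pi) : ℂ) * ((aeval x (hermite n) : ℝ) : ℂ) :=
  (J_pair x n).1

lemma intg (n : ℕ) : Integrable (fun p : ℝ × ℝ =>
    Real.sqrt (p.1 ^ 2 + p.2 ^ 2) ^ n * Real.exp (-(p.1 ^ 2 + p.2 ^ 2) / 2))
    (volume.prod volume) := by
  have hmaj : Integrable (fun p : ℝ × ℝ =>
      2 ^ n * ((|p.1| ^ n * Real.exp (-p.1 ^ 2 / 2)) * Real.exp (-p.2 ^ 2 / 2))
        + 2 ^ n * ((Real.exp (-p.1 ^ 2 / 2)) * (|p.2| ^ n * Real.exp (-p.2 ^ 2 / 2))))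
      (volume.prod volume) :=
    (((abs_pow_gauss_int n).mul_prod gauss_int).const_mul _).add
      ((gauss_int.mul_prod (abs_pow_gauss_int n)).const_mul _)
  refine hmaj.mono' ?_ ?_
  · apply Continuous.aestronglyMeasurable
    exact ((Real.continuous_sqrt.comp
        ((continuous_fst.pow 2).add (continuous_snd.pow 2))).pow n).mul
      (Real.continuous_exp.comp
        (((continuous_fst.pow 2).add (continuous_snd.pow 2)).neg.div_const 2))
  · refine Eventually.of_forall fun p => ?_
    have hnn : (0:ℝ) ≤ Real.sqrt (p.1 ^ 2 + p.2 ^ 2) ^ n * Real.exp (-(p.1 ^ 2 + p.2 ^ 2) / 2) := by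
      positivity
    rw [Real.norm_eq_abs, abs_of_nonneg hnn]
    have hsplit : Real.exp (-(p.1 ^ 2 + p.2 ^ 2) / 2)
        = Real.exp (-p.1 ^ 2 / 2) * Real.exp (-p.2 ^ 2 / 2) := by
      rw [← Real.exp_add]; ring_nf
    calc Real.sqrt (p.1 ^ 2 + p.2 ^ 2) ^ n * Real.exp (-(p.1 ^ 2 + p.2 ^ 2) / 2)
        ≤ (2 ^ n * (|p.1| ^ n + |p.2| ^ n)) * Real.exp (-(p.1 ^ 2 + p.2 ^ 2) / 2) :=
          mul_le_mul_of_nonneg_right (bound_aux p.1 p.2 n) (Real.exp_pos _).le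
      _ = _ := by rw [hsplit]; ring

lemma plane_integral (n : ℕ) : (∫ p : ℝ × ℝ,
    Real.sqrt (p.1 ^ 2 + p.2 ^ 2) ^ n * Real.exp (-(p.1 ^ 2 + p.2 ^ 2) / 2))
    = 2 * Real.pi * (2:ℝ) ^ ((n:ℝ)/2) * Real.Gamma (1 + (n:ℝ)/2) := by
  have hmp := Complex.volume_preserving_equiv_real_prod
  have hme : MeasurableEmbedding Complex.measurableEquivRealProd :=
    Complex.measurableEquivRealProd.measurableEmbedding
  have h1 := hmp.integral_comp hme (fun p : ℝ × ℝ =>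
    Real.sqrt (p.1 ^ 2 + p.2 ^ 2) ^ n * Real.exp (-(p.1 ^ 2 + p.2 ^ 2) / 2))
  rw [← h1]
  have h2 : ∀ w : ℂ, Real.sqrt ((Complex.measurableEquivRealProd w).1 ^ 2
        + (Complex.measurableEquivRealProd w).2 ^ 2) ^ n
        * Real.exp (-((Complex.measurableEquivRealProd w).1 ^ 2
          + (Complex.measurableEquivRealProd w).2 ^ 2) / 2)
      = ‖w‖ ^ ((n:ℝ)) * Real.exp (-(1/2) * ‖w‖ ^ (2:ℝ)) := by
    intro w
    rw [Complex.measurableEquivRealProd_apply]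
    have habs : Real.sqrt (w.re ^ 2 + w.im ^ 2) = ‖w‖ := by
      rw [Complex.norm_def, Complex.normSq_apply]; ring_nf
    have hsq : ‖w‖ ^ (2:ℝ) = w.re ^ 2 + w.im ^ 2 := by
      rw [Real.rpow_two, ← habs, Real.sq_sqrt (by positivity)]
    simp only [habs, hsq]
    rw [← Real.rpow_natCast ‖w‖ n]
    ring_nf
  rw [integral_congr_ae (Eventually.of_forall h2)]
  rw [Complex.integral_rpow_mul_exp_neg_mul_rpow one_le_two
    (by exact lt_of_lt_of_le (by norm_num) (Nat.cast_nonneg n)) (by norm_num : (0:ℝ) < 1/2)]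
  have hpow : ((1:ℝ)/2) ^ (-(((n:ℝ)) + 2) / 2) = (2:ℝ) ^ (((n:ℝ) + 2) / 2) := by
    rw [one_div, Real.inv_rpow (by norm_num : (0:ℝ) ≤ 2),
      ← Real.rpow_neg (by norm_num : (0:ℝ) ≤ 2)]
    congr 1
    ring
  rw [hpow]
  have hsplit : (2:ℝ) ^ (((n:ℝ) + 2) / 2) = (2:ℝ) ^ ((n:ℝ)/2) * 2 := by
    rw [show ((n:ℝ) + 2) / 2 = (n:ℝ)/2 + 1 by ring, Real.rpow_add (by norm_num), Real.rpow_one]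
  have hG : Real.Gamma (((n:ℝ) + 2) / 2) = Real.Gamma (1 + (n:ℝ)/2) := by
    congr 1; ring
  rw [hsplit, hG]
  ring


lemma He_eq (n : ℕ) (x : ℝ) : He n x = aeval x (hermite n) := by
  rw [He, hermite_eq_deriv_gaussian']
  rw [show (fun y : ℝ => Real.exp (-(y ^ 2) / 2)) = fun y : ℝ => Real.exp (-(y ^ 2 / 2)) by
    funext y; ring_nf]
  rw [iteratedDeriv_eq_iterate]
  ring

lemma He_bound (n : ℕ) (x : ℝ) :
    Real.sqrt (2 * Real.pi) * |He n x|
      ≤ ∫ z : ℝ, Real.sqrt (x ^ 2 + z ^ 2) ^ n * Real.exp (-z ^ 2 / 2) := by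
  have h1 : Real.sqrt (2 * Real.pi) * |He n x|
      = ‖(Real.sqrt (2 * Real.pi) : ℂ) * ((aeval x (hermite n) : ℝ) : ℂ)‖ := by
    rw [He_eq, norm_mul, Complex.norm_real, Complex.norm_real, Real.norm_eq_abs,
      Real.norm_eq_abs, abs_of_nonneg (Real.sqrt_nonneg _)]
  rw [h1, ← J_eq]
  refine (norm_integral_le_integral_norm _).trans_eq ?_
  simp_rw [norm_aux]

lemma norm_integrand (n : ℕ) (t ω : ℝ) :
    ‖(He n ω : ℂ) * Complex.exp (-(ω : ℂ) ^ 2 / 2) * Complex.exp (Complex.I * (t : ℂ) * (ω : ℂ))‖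
      = |He n ω| * Real.exp (-ω ^ 2 / 2) := by
  rw [norm_mul, norm_mul, Complex.norm_real, Real.norm_eq_abs,
    Complex.norm_exp, Complex.norm_exp]
  have h1 : (-(ω:ℂ) ^ 2 / 2).re = -ω ^ 2 / 2 := by
    rw [show (-(ω:ℂ) ^ 2 / 2) = ((-ω ^ 2 / 2 : ℝ) : ℂ) by push_cast; ring, Complex.ofReal_re]
  have h2 : (Complex.I * (t:ℂ) * (ω:ℂ)).re = 0 := by
    rw [show Complex.I * (t:ℂ) * (ω:ℂ) = ((t * ω : ℝ):ℂ) * Complex.I by push_cast; ring]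
    simp
  rw [h1, h2, Real.exp_zero, mul_one]


theorem stmt_0 (n : ℕ) (t : ℝ) :
    ‖calI n t‖ ≤ Real.sqrt (Real.pi / 2) * (2 : ℝ) ^ ((n : ℝ) / 2) *
      Real.Gamma (1 + (n : ℝ) / 2) := by
  have pi_pos := Real.pi_pos
  set c := Real.sqrt (2 * Real.pi) with hc_def
  have hc : 0 < c := Real.sqrt_pos.mpr (by positivity)
  set F : ℝ → ℝ := fun ω => ∫ z : ℝ,
    Real.sqrt (ω ^ 2 + z ^ 2) ^ n * Real.exp (-(ω ^ 2 + z ^ 2) / 2) with hF_def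
  have hF_int : Integrable F := by
    have h := (intg n).integral_prod_left
    exact h
  -- step 1
  have step1 : ‖calI n t‖ ≤ ∫ ω in Ioi (0:ℝ), |He n ω| * Real.exp (-ω ^ 2 / 2) := by
    refine (norm_integral_le_integral_norm _).trans_eq ?_
    simp_rw [norm_integrand]
  -- pointwise bound
  have hpt : ∀ ω : ℝ, |He n ω| * Real.exp (-ω ^ 2 / 2) ≤ c⁻¹ * F ω := by
    intro ω
    have h1 : c * |He n ω| ≤ ∫ z : ℝ, Real.sqrt (ω ^ 2 + z ^ 2) ^ n * Real.exp (-z ^ 2 / 2) :=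
      He_bound n ω
    have h2 : (∫ z : ℝ, Real.sqrt (ω ^ 2 + z ^ 2) ^ n * Real.exp (-z ^ 2 / 2))
        * Real.exp (-ω ^ 2 / 2) = F ω := by
      rw [← integral_mul_const]
      refine integral_congr_ae (Eventually.of_forall fun z => ?_)
      dsimp only
      rw [show Real.exp (-(ω ^ 2 + z ^ 2) / 2)
        = Real.exp (-z ^ 2 / 2) * Real.exp (-ω ^ 2 / 2) by rw [← Real.exp_add]; ring_nf]
      ring
    have h3 : c * (|He n ω| * Real.exp (-ω ^ 2 / 2)) ≤ F ω := by
      rw [← h2]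
      calc c * (|He n ω| * Real.exp (-ω ^ 2 / 2))
          = (c * |He n ω|) * Real.exp (-ω ^ 2 / 2) := by ring
        _ ≤ _ := mul_le_mul_of_nonneg_right h1 (Real.exp_pos _).le
    calc |He n ω| * Real.exp (-ω ^ 2 / 2)
        = c⁻¹ * (c * (|He n ω| * Real.exp (-ω ^ 2 / 2))) := by field_simp
      _ ≤ c⁻¹ * F ω := mul_le_mul_of_nonneg_left h3 (by positivity)
  -- step 2
  have step2 : (∫ ω in Ioi (0:ℝ), |He n ω| * Real.exp (-ω ^ 2 / 2))
      ≤ ∫ ω in Ioi (0:ℝ), c⁻¹ * F ω := by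
    refine integral_mono_of_nonneg (Eventually.of_forall fun ω => by positivity)
      ((hF_int.const_mul c⁻¹).integrableOn) (Eventually.of_forall fun ω => hpt ω)
  -- step 4 : half-line to full line
  have heven : ∀ ω : ℝ, F |ω| = F ω := by
    intro ω
    simp only [hF_def, sq_abs]
  have step4 : (∫ ω : ℝ, F ω) = 2 * ∫ ω in Ioi (0:ℝ), F ω := by
    rw [show (∫ ω : ℝ, F ω) = ∫ ω : ℝ, F |ω| from
      integral_congr_ae (Eventually.of_forall fun ω => (heven ω).symm)]
    exact integral_comp_abs
  -- step 5 : Fubini + polar value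
  have step5 : (∫ ω : ℝ, F ω) = 2 * Real.pi * (2:ℝ) ^ ((n:ℝ)/2) * Real.Gamma (1 + (n:ℝ)/2) := by
    have h := MeasureTheory.integral_integral (μ := volume) (ν := volume)
      (f := fun ω z : ℝ => Real.sqrt (ω ^ 2 + z ^ 2) ^ n * Real.exp (-(ω ^ 2 + z ^ 2) / 2))
      (by exact intg n)
    rw [← plane_integral n, Measure.volume_eq_prod]
    exact h
  have hIoiF : (∫ ω in Ioi (0:ℝ), F ω)
      = Real.pi * (2:ℝ) ^ ((n:ℝ)/2) * Real.Gamma (1 + (n:ℝ)/2) := by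
    have := step4
    rw [step5] at this
    linarith
  have key : Real.sqrt (Real.pi / 2) * c = Real.pi := by
    rw [hc_def, ← Real.sqrt_mul (by positivity), show Real.pi / 2 * (2 * Real.pi) = Real.pi ^ 2
      by ring]
    exact Real.sqrt_sq pi_pos.le
  calc ‖calI n t‖ ≤ ∫ ω in Ioi (0:ℝ), c⁻¹ * F ω := step1.trans step2
    _ = c⁻¹ * ∫ ω in Ioi (0:ℝ), F ω := integral_const_mul _ _
    _ = c⁻¹ * (Real.pi * ((2:ℝ) ^ ((n:ℝ)/2) * Real.Gamma (1 + (n:ℝ)/2))) := by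
        rw [hIoiF]; ring
    _ = Real.sqrt (Real.pi / 2) * (2 : ℝ) ^ ((n : ℝ) / 2) * Real.Gamma (1 + (n : ℝ) / 2) := by
        have hs : Real.sqrt (Real.pi / 2) = Real.pi / c := by
          rw [eq_div_iff hc.ne']; exact key
        rw [hs]; field_simp


end HBAux

open HBAux Set Filter Polynomial in
theorem stmt_0 (n : ℕ) (t : ℝ) :
    ‖calI n t‖ ≤ Real.sqrt (Real.pi / 2) * (2 : ℝ) ^ ((n : ℝ) / 2) *
      Real.Gamma (1 + (n : ℝ) / 2) := by
  have pi_pos := Real.pi_pos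
  set c := Real.sqrt (2 * Real.pi) with hc_def
  have hc : 0 < c := Real.sqrt_pos.mpr (by positivity)
  set F : ℝ → ℝ := fun ω => ∫ z : ℝ,
    Real.sqrt (ω ^ 2 + z ^ 2) ^ n * Real.exp (-(ω ^ 2 + z ^ 2) / 2) with hF_def
  have hF_int : Integrable F := by
    have h := (intg n).integral_prod_left
    exact h
  -- step 1
  have step1 : ‖calI n t‖ ≤ ∫ ω in Ioi (0:ℝ), |He n ω| * Real.exp (-ω ^ 2 / 2) := by
    refine (norm_integral_le_integral_norm _).trans_eq ?_
    simp_rw [norm_integrand]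
  -- pointwise bound
  have hpt : ∀ ω : ℝ, |He n ω| * Real.exp (-ω ^ 2 / 2) ≤ c⁻¹ * F ω := by
    intro ω
    have h1 : c * |He n ω| ≤ ∫ z : ℝ, Real.sqrt (ω ^ 2 + z ^ 2) ^ n * Real.exp (-z ^ 2 / 2) :=
      He_bound n ω
    have h2 : (∫ z : ℝ, Real.sqrt (ω ^ 2 + z ^ 2) ^ n * Real.exp (-z ^ 2 / 2))
        * Real.exp (-ω ^ 2 / 2) = F ω := by
      rw [← integral_mul_const]
      refine integral_congr_ae (Eventually.of_forall fun z => ?_)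
      dsimp only
      rw [show Real.exp (-(ω ^ 2 + z ^ 2) / 2)
        = Real.exp (-z ^ 2 / 2) * Real.exp (-ω ^ 2 / 2) by rw [← Real.exp_add]; ring_nf]
      ring
    have h3 : c * (|He n ω| * Real.exp (-ω ^ 2 / 2)) ≤ F ω := by
      rw [← h2]
      calc c * (|He n ω| * Real.exp (-ω ^ 2 / 2))
          = (c * |He n ω|) * Real.exp (-ω ^ 2 / 2) := by ring
        _ ≤ _ := mul_le_mul_of_nonneg_right h1 (Real.exp_pos _).le
    calc |He n ω| * Real.exp (-ω ^ 2 / 2)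
        = c⁻¹ * (c * (|He n ω| * Real.exp (-ω ^ 2 / 2))) := by field_simp
      _ ≤ c⁻¹ * F ω := mul_le_mul_of_nonneg_left h3 (by positivity)
  -- step 2
  have step2 : (∫ ω in Ioi (0:ℝ), |He n ω| * Real.exp (-ω ^ 2 / 2))
      ≤ ∫ ω in Ioi (0:ℝ), c⁻¹ * F ω := by
    refine integral_mono_of_nonneg (Eventually.of_forall fun ω => by positivity)
      ((hF_int.const_mul c⁻¹).integrableOn) (Eventually.of_forall fun ω => hpt ω)
  -- step 4 : half-line to full line
  have heven : ∀ ω : ℝ, F |ω| = F ω := by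
    intro ω
    simp only [hF_def, sq_abs]
  have step4 : (∫ ω : ℝ, F ω) = 2 * ∫ ω in Ioi (0:ℝ), F ω := by
    rw [show (∫ ω : ℝ, F ω) = ∫ ω : ℝ, F |ω| from
      integral_congr_ae (Eventually.of_forall fun ω => (heven ω).symm)]
    exact integral_comp_abs
  -- step 5 : Fubini + polar value
  have step5 : (∫ ω : ℝ, F ω) = 2 * Real.pi * (2:ℝ) ^ ((n:ℝ)/2) * Real.Gamma (1 + (n:ℝ)/2) := by
    have h := MeasureTheory.integral_integral (μ := volume) (ν := volume)
      (f := fun ω z : ℝ => Real.sqrt (ω ^ 2 + z ^ 2) ^ n * Real.exp (-(ω ^ 2 + z ^ 2) / 2))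
      (by exact intg n)
    rw [← plane_integral n, Measure.volume_eq_prod]
    exact h
  have hIoiF : (∫ ω in Ioi (0:ℝ), F ω)
      = Real.pi * (2:ℝ) ^ ((n:ℝ)/2) * Real.Gamma (1 + (n:ℝ)/2) := by
    have := step4
    rw [step5] at this
    linarith
  have key : Real.sqrt (Real.pi / 2) * c = Real.pi := by
    rw [hc_def, ← Real.sqrt_mul (by positivity), show Real.pi / 2 * (2 * Real.pi) = Real.pi ^ 2
      by ring]
    exact Real.sqrt_sq pi_pos.le
  calc ‖calI n t‖ ≤ ∫ ω in Ioi (0:ℝ), c⁻¹ * F ω := step1.trans step2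
    _ = c⁻¹ * ∫ ω in Ioi (0:ℝ), F ω := integral_const_mul _ _
    _ = c⁻¹ * (Real.pi * ((2:ℝ) ^ ((n:ℝ)/2) * Real.Gamma (1 + (n:ℝ)/2))) := by
        rw [hIoiF]; ring
    _ = Real.sqrt (Real.pi / 2) * (2 : ℝ) ^ ((n : ℝ) / 2) * Real.Gamma (1 + (n : ℝ) / 2) := by
        have hs : Real.sqrt (Real.pi / 2) = Real.pi / c := by
          rw [eq_div_iff hc.ne']; exact key
        rw [hs]; field_simp
end

section
/- Let n and M be integers with 0 ≤ n < M, and let t > 0 be real. Define R_{n,M}(t) = 𝓘ₙ(t) + i^{n−1} Σ_{l=⌈n/2⌉}^{⌊(M−1)/2⌋} (2l−1)!!/t^{2l−n+1}, where (−1)!! = 1. Then |R_{n,M}(t)| ≤ √(π/2) · t^{n−M} · 2^{M/2} · Γ(1 + M/2). -/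
open MeasureTheory

/-- `(2l−1)!! = 1·3·⋯·(2l−1)`, with the convention `(−1)!! = 1` (the case `l = 0`). -/
def oddDoubleFactorial (l : ℕ) : ℕ := ∏ i ∈ Finset.range l, (2 * i + 1)

section Stmt1AuxSection

open Polynomial Set Filter
open scoped Nat

namespace Stmt1Aux

/-- polynomial times gaussian -/
noncomputable def pg (p : ℝ[X]) (x : ℝ) : ℝ := p.eval x * Real.exp (-x ^ 2 / 2)

lemma hasDerivAt_pg (p : ℝ[X]) (x : ℝ) :
    HasDerivAt (pg p) (pg (derivative p - X * p) x) x := by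
  have h1 := p.hasDerivAt x
  have h2 : HasDerivAt (fun x : ℝ => Real.exp (-x ^ 2 / 2)) (-x * Real.exp (-x ^ 2 / 2)) x := by
    have h3 : HasDerivAt (fun x : ℝ => -x ^ 2 / 2) (-x) x := by
      have : HasDerivAt (fun x : ℝ => -x ^ 2 / 2) (-((2:ℕ) * x ^ (2 - 1)) / 2) x := (hasDerivAt_pow 2 x).neg.div_const 2
      convert this using 1
      ring
    simpa [mul_comm] using h3.exp
  have := h1.mul h2
  simp only [pg, eval_sub, eval_mul, eval_X]
  exact this.congr_deriv (by ring)

lemma integrable_pow_gauss (k : ℕ) :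
    Integrable (fun x : ℝ => x ^ k * Real.exp (-x ^ 2 / 2)) := by
  have h := integrable_rpow_mul_exp_neg_mul_sq (b := (1:ℝ)/2) (by norm_num)
      (s := (k : ℝ)) (lt_of_lt_of_le neg_one_lt_zero (Nat.cast_nonneg k))
  have he : (fun x : ℝ => x ^ (k:ℝ) * Real.exp (-(1/2) * x ^ 2))
      = fun x : ℝ => x ^ k * Real.exp (-x ^ 2 / 2) := by
    funext x
    rw [Real.rpow_natCast]
    ring_nf
  rwa [he] at h

lemma integrable_pg (p : ℝ[X]) : Integrable (pg p) := by
  have he : pg p = fun x => ∑ k ∈ Finset.range (p.natDegree + 1),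
      p.coeff k * (x ^ k * Real.exp (-x ^ 2 / 2)) := by
    funext x
    rw [pg, eval_eq_sum_range, Finset.sum_mul]
    exact Finset.sum_congr rfl fun k _ => by ring
  rw [he]
  exact integrable_finset_sum _ fun k _ => (integrable_pow_gauss k).const_mul _

lemma tendsto_pow_gauss (k : ℕ) :
    Tendsto (fun x : ℝ => x ^ k * Real.exp (-x ^ 2 / 2)) atTop (nhds 0) := by
  have h := rpow_mul_exp_neg_mul_sq_isLittleO_exp_neg (b := (1:ℝ)/2) (by norm_num) (k : ℝ)
  have h2 : Tendsto (fun x : ℝ => Real.exp (-(1/2) * x)) atTop (nhds 0) := by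
    have h3 : Tendsto (fun x : ℝ => -(1/2) * x) atTop atBot :=
      (tendsto_id (α := ℝ)).const_mul_atTop_of_neg (by norm_num)
    exact Real.tendsto_exp_atBot.comp h3
  have := h.isBigO.trans_tendsto h2
  have he : (fun x : ℝ => x ^ (k:ℝ) * Real.exp (-(1/2) * x ^ 2))
      = fun x : ℝ => x ^ k * Real.exp (-x ^ 2 / 2) := by
    funext x; rw [Real.rpow_natCast]; ring_nf
  rwa [he] at this

end Stmt1Aux

namespace Stmt1Aux
open Stmt1Aux

lemma tendsto_pg_top (p : ℝ[X]) : Tendsto (pg p) atTop (nhds 0) := by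
  have he : pg p = fun x => ∑ k ∈ Finset.range (p.natDegree + 1),
      p.coeff k * (x ^ k * Real.exp (-x ^ 2 / 2)) := by
    funext x
    rw [pg, eval_eq_sum_range, Finset.sum_mul]
    exact Finset.sum_congr rfl fun k _ => by ring
  rw [he]
  have : Tendsto (fun x : ℝ => ∑ k ∈ Finset.range (p.natDegree + 1),
      p.coeff k * (x ^ k * Real.exp (-x ^ 2 / 2))) atTop
      (nhds (∑ k ∈ Finset.range (p.natDegree + 1), p.coeff k * 0)) :=
    tendsto_finset_sum _ fun k _ => (tendsto_pow_gauss k).const_mul _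
  simpa using this

lemma tendsto_pg_bot (p : ℝ[X]) : Tendsto (pg p) atBot (nhds 0) := by
  have he : pg p = (pg (p.comp (-X))) ∘ (fun x : ℝ => -x) := by
    funext x
    simp [pg, eval_comp, Function.comp]
  rw [he]
  exact (tendsto_pg_top _).comp tendsto_neg_atBot_atTop

/-- integral over ℝ of the derivative of a pg function is 0 -/
lemma integral_pg_deriv (p : ℝ[X]) : ∫ x : ℝ, pg (derivative p - X * p) x = 0 := by
  have hio : ∫ x in Ioi (0:ℝ), pg (derivative p - X * p) x = 0 - pg p 0 :=
    integral_Ioi_of_hasDerivAt_of_tendsto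
      (hasDerivAt_pg p 0).continuousAt.continuousWithinAt
      (fun x _ => hasDerivAt_pg p x)
      (integrable_pg _).integrableOn (tendsto_pg_top p)
  have hic : ∫ x in Iic (0:ℝ), pg (derivative p - X * p) x = pg p 0 - 0 :=
    integral_Iic_of_hasDerivAt_of_tendsto
      (hasDerivAt_pg p 0).continuousAt.continuousWithinAt
      (fun x _ => hasDerivAt_pg p x)
      (integrable_pg _).integrableOn (tendsto_pg_bot p)
  rw [← intervalIntegral.integral_Iic_add_Ioi (integrable_pg _).integrableOn (integrable_pg _).integrableOn,
    hio, hic]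
  ring

lemma integral_gauss : ∫ x : ℝ, Real.exp (-x ^ 2 / 2) = Real.sqrt (2 * Real.pi) := by
  have h := integral_gaussian ((1:ℝ)/2)
  have he : (fun x : ℝ => Real.exp (-(1/2) * x ^ 2)) = fun x => Real.exp (-x ^ 2 / 2) := by
    funext x; ring_nf
  rw [he] at h
  rw [h, show Real.pi / (1/2) = 2 * Real.pi by ring]

lemma integral_gauss_Ioi : ∫ x in Ioi (0:ℝ), Real.exp (-x ^ 2 / 2) = Real.sqrt (Real.pi / 2) := by
  have h := integral_gaussian_Ioi ((1:ℝ)/2)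
  have he : (fun x : ℝ => Real.exp (-(1/2) * x ^ 2)) = fun x => Real.exp (-x ^ 2 / 2) := by
    funext x; ring_nf
  rw [he] at h
  rw [h, show Real.pi / (1/2) = 2 * Real.pi by ring,
    show Real.pi / 2 = (2 * Real.pi) / 4 by ring,
    Real.sqrt_div (by positivity), show √(4:ℝ) = 2 by
      rw [show (4:ℝ) = 2 ^ 2 by norm_num, Real.sqrt_sq (by norm_num)]]

end Stmt1Aux

namespace Stmt1Aux

/-- Hermite polynomial over ℝ -/
noncomputable def H (n : ℕ) : ℝ[X] := (hermite n).map (Int.castRingHom ℝ)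

lemma H_succ (n : ℕ) : H (n + 1) = X * H n - derivative (H n) := by
  simp only [H, hermite_succ, Polynomial.map_sub, Polynomial.map_mul, map_X, derivative_map]

lemma H_natDegree (n : ℕ) : (H n).natDegree = n := by
  rw [H, (hermite_monic n).natDegree_map, natDegree_hermite]

lemma H_coeff (n k : ℕ) : (H n).coeff k = ((hermite n).coeff k : ℝ) := by
  simp [H, coeff_map]

lemma H_coeff_self (n : ℕ) : (H n).coeff n = 1 := by
  rw [H_coeff, coeff_hermite_self]; norm_num

lemma H_eval_neg (n : ℕ) (x : ℝ) : (H n).eval (-x) = (-1) ^ n * (H n).eval x := by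
  rw [eval_eq_sum_range, eval_eq_sum_range, H_natDegree, Finset.mul_sum]
  refine Finset.sum_congr rfl fun i hi => ?_
  rcases Nat.even_or_odd (n + i) with h | h
  · have h1 : (-1 : ℝ) ^ n * (-1 : ℝ) ^ i = 1 := by
      rw [← pow_add]; exact h.neg_one_pow
    have h2 : (-1 : ℝ) ^ n * (-1 : ℝ) ^ n = 1 := by
      rw [← pow_add, ← two_mul, pow_mul]; norm_num
    have hpar : (-1 : ℝ) ^ i = (-1 : ℝ) ^ n := by
      have h3 : ((-1 : ℝ) ^ n * (-1 : ℝ) ^ n) * (-1 : ℝ) ^ i = (-1 : ℝ) ^ n := by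
        rw [mul_assoc, h1, mul_one]
      rwa [h2, one_mul] at h3
    rw [neg_pow, hpar]
    ring
  · rw [H_coeff, coeff_hermite_of_odd_add h]
    norm_num

/-- iterated derivative of a polynomial of degree ≤ n -/
lemma iterate_derivative_eq (n : ℕ) : ∀ p : ℝ[X], p.natDegree ≤ n →
    derivative^[n] p = C ((n ! : ℝ) * p.coeff n) := by
  induction n with
  | zero =>
    intro p hp
    rw [Function.iterate_zero_apply, Nat.factorial_zero, Polynomial.eq_C_of_natDegree_le_zero hp]
    simp
  | succ n ih =>
    intro p hp
    rw [Function.iterate_succ_apply, ih (derivative p)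
      (le_trans (natDegree_derivative_le p) (by omega)), coeff_derivative]
    congr 1
    push_cast [Nat.factorial_succ]
    ring

/-- key integration by parts chain -/
lemma ibp_chain : ∀ (j : ℕ) (u : ℝ[X]),
    ∫ x : ℝ, pg (u * H j) x = ∫ x : ℝ, pg (derivative^[j] u * H 0) x := by
  intro j
  induction j with
  | zero => intro u; simp
  | succ j ih =>
    intro u
    have h0 := integral_pg_deriv (-(u * H j))
    have hsplit : ∀ x : ℝ, pg (derivative (-(u * H j)) - X * -(u * H j)) x
        = pg (u * H (j+1)) x - pg (derivative u * H j) x := by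
      intro x
      have : derivative (-(u * H j)) - X * -(u * H j)
          = u * H (j+1) - derivative u * H j := by
        rw [H_succ]
        rw [derivative_neg, derivative_mul]
        ring
      rw [this]
      simp only [pg, eval_sub]
      ring
    rw [MeasureTheory.integral_congr_ae (Filter.Eventually.of_forall hsplit),
      integral_sub (integrable_pg _) (integrable_pg _)] at h0
    have : ∫ x : ℝ, pg (u * H (j+1)) x = ∫ x : ℝ, pg (derivative u * H j) x := by
      linarith [h0]
    rw [this, ih (derivative u), ← Function.iterate_succ_apply]

lemma H_sq_integral (M : ℕ) :
    ∫ x : ℝ, pg (H M * H M) x = Real.sqrt (2 * Real.pi) * (M ! : ℝ) := by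
  rw [ibp_chain M (H M), iterate_derivative_eq M (H M) (H_natDegree M).le, H_coeff_self]
  have : ∀ x : ℝ, pg (C ((M ! : ℝ) * 1) * H 0) x = (M ! : ℝ) * Real.exp (-x ^ 2 / 2) := by
    intro x
    simp [pg, H, hermite_zero]
  rw [MeasureTheory.integral_congr_ae (Filter.Eventually.of_forall this),
    MeasureTheory.integral_const_mul, integral_gauss]
  ring

end Stmt1Aux

namespace Stmt1Aux

lemma integral_Ioi_pg_sq (M : ℕ) :
    ∫ x in Ioi (0:ℝ), pg (H M * H M) x = Real.sqrt (2 * Real.pi) * (M ! : ℝ) / 2 := by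
  have heven : ∀ x : ℝ, pg (H M * H M) (-x) = pg (H M * H M) x := by
    intro x
    have h2 : ((-1 : ℝ) ^ M) * ((-1 : ℝ) ^ M) = 1 := by
      rw [← pow_add, ← two_mul, pow_mul]; norm_num
    have hsq : (-x) ^ 2 = x ^ 2 := by ring
    simp only [pg, eval_mul, H_eval_neg, hsq]
    linear_combination (eval x (H M) * eval x (H M) * Real.exp (-x ^ 2 / 2)) * h2
  have h1 : ∫ x in Iic (0:ℝ), pg (H M * H M) x = ∫ x in Ioi (0:ℝ), pg (H M * H M) x := by
    have hcn := integral_comp_neg_Ioi (0:ℝ) (pg (H M * H M))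
    rw [neg_zero] at hcn
    rw [← hcn]
    exact MeasureTheory.integral_congr_ae (Filter.Eventually.of_forall fun x => heven x)
  have h2 := intervalIntegral.integral_Iic_add_Ioi (b := (0:ℝ))
    (integrable_pg (H M * H M)).integrableOn (integrable_pg (H M * H M)).integrableOn
  rw [h1, H_sq_integral] at h2
  linarith

lemma pg_abs_le (p : ℝ[X]) (c : ℝ) (hc : 0 < c) (x : ℝ) :
    |pg p x| ≤ (1 / (2 * c)) * pg (p * p) x + (c / 2) * pg 1 x := by
  have he : 0 < Real.exp (-x ^ 2 / 2) := Real.exp_pos _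
  have habs : |pg p x| = |p.eval x| * Real.exp (-x ^ 2 / 2) := by
    rw [pg, abs_mul, abs_of_pos he]
  rw [habs]
  have hsq : pg (p * p) x = (p.eval x) ^ 2 * Real.exp (-x ^ 2 / 2) := by
    simp [pg]; ring
  have h1 : pg 1 x = Real.exp (-x ^ 2 / 2) := by simp [pg]
  rw [hsq, h1]
  have key : |p.eval x| ≤ (1 / (2 * c)) * (p.eval x) ^ 2 + c / 2 := by
    have h4 : 2 * c * |p.eval x| ≤ (p.eval x) ^ 2 + c ^ 2 := by
      nlinarith [sq_nonneg (|p.eval x| - c), sq_abs (p.eval x)]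
    have h5 : |p.eval x| ≤ ((p.eval x) ^ 2 + c ^ 2) / (2 * c) := by
      rw [le_div_iff₀ (by positivity)]; linarith
    have h6 : ((p.eval x) ^ 2 + c ^ 2) / (2 * c) = (1 / (2 * c)) * (p.eval x) ^ 2 + c / 2 := by
      field_simp
    linarith [h5, h6.le]
  nlinarith [mul_le_mul_of_nonneg_right key he.le]

lemma integral_abs_pg_le (M : ℕ) :
    ∫ x in Ioi (0:ℝ), |pg (H M) x| ≤ Real.sqrt (Real.pi * (M ! : ℝ) / 2) := by
  set N : ℝ := Real.sqrt (2 * Real.pi) * (M ! : ℝ) / 2 with hN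
  set A : ℝ := Real.sqrt (Real.pi / 2) with hA
  have hApos : 0 < A := Real.sqrt_pos.mpr (by positivity)
  have hNpos : 0 < N := by
    have : (0:ℝ) < (M ! : ℝ) := by exact_mod_cast M.factorial_pos
    have : (0:ℝ) < Real.sqrt (2 * Real.pi) := Real.sqrt_pos.mpr (by positivity)
    positivity
  set c : ℝ := Real.sqrt N / Real.sqrt A with hc
  have hcpos : 0 < c := by positivity
  have hbound : ∫ x in Ioi (0:ℝ), |pg (H M) x|
      ≤ ∫ x in Ioi (0:ℝ), ((1 / (2 * c)) * pg (H M * H M) x + (c / 2) * pg 1 x) := by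
    refine MeasureTheory.setIntegral_mono_on ?_ ?_ measurableSet_Ioi ?_
    · exact (integrable_pg (H M)).abs.integrableOn
    · exact (((integrable_pg (H M * H M)).const_mul _).add
        ((integrable_pg 1).const_mul _)).integrableOn
    · intro x _
      exact pg_abs_le (H M) c hcpos x
  have hval : ∫ x in Ioi (0:ℝ), ((1 / (2 * c)) * pg (H M * H M) x + (c / 2) * pg 1 x)
      = (1 / (2 * c)) * N + (c / 2) * A := by
    rw [MeasureTheory.integral_add (((integrable_pg (H M * H M)).const_mul _)).integrableOn
      (((integrable_pg 1)).const_mul _).integrableOn,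
      MeasureTheory.integral_const_mul, MeasureTheory.integral_const_mul,
      integral_Ioi_pg_sq]
    have hpg1 : ∀ x : ℝ, pg 1 x = Real.exp (-x ^ 2 / 2) := fun x => by simp [pg]
    rw [MeasureTheory.integral_congr_ae (Filter.Eventually.of_forall hpg1), integral_gauss_Ioi]
  have hAMGM : (1 / (2 * c)) * N + (c / 2) * A = Real.sqrt N * Real.sqrt A := by
    rw [hc]
    have hsN : Real.sqrt N * Real.sqrt N = N := Real.mul_self_sqrt hNpos.le
    have hsA : Real.sqrt A * Real.sqrt A = A := Real.mul_self_sqrt hApos.le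
    have hsNpos : 0 < Real.sqrt N := Real.sqrt_pos.mpr hNpos
    have hsApos : 0 < Real.sqrt A := Real.sqrt_pos.mpr hApos
    field_simp
    nlinarith [hsN, hsA]
  have hNA : N * A = Real.pi * (M ! : ℝ) / 2 := by
    rw [hN, hA]
    have : Real.sqrt (2 * Real.pi) * Real.sqrt (Real.pi / 2) = Real.pi := by
      rw [← Real.sqrt_mul (by positivity)]
      rw [show 2 * Real.pi * (Real.pi / 2) = Real.pi ^ 2 by ring]
      exact Real.sqrt_sq Real.pi_pos.le
    calc Real.sqrt (2 * Real.pi) * (M ! : ℝ) / 2 * Real.sqrt (Real.pi / 2)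
        = (Real.sqrt (2 * Real.pi) * Real.sqrt (Real.pi / 2)) * (M ! : ℝ) / 2 := by ring
      _ = Real.pi * (M ! : ℝ) / 2 := by rw [this]
  calc ∫ x in Ioi (0:ℝ), |pg (H M) x|
      ≤ (1 / (2 * c)) * N + (c / 2) * A := hbound.trans hval.le
    _ = Real.sqrt N * Real.sqrt A := hAMGM
    _ = Real.sqrt (N * A) := (Real.sqrt_mul hNpos.le A).symm
    _ = Real.sqrt (Real.pi * (M ! : ℝ) / 2) := by rw [hNA]

end Stmt1Aux

namespace Stmt1Aux

lemma gamma_step : ∀ M : ℕ, Real.Gamma (((M:ℝ) + 1) / 2) ≤ Real.sqrt Real.pi * Real.Gamma (((M:ℝ) + 2) / 2) := by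
  intro M
  induction M using Nat.strong_induction_on with
  | _ M ih =>
    match M with
    | 0 =>
      norm_num
      rw [Real.Gamma_one_half_eq]
    | 1 =>
      norm_num
      rw [show (3:ℝ)/2 = 1/2 + 1 by norm_num,
        Real.Gamma_add_one (by norm_num), Real.Gamma_one_half_eq]
      rw [show Real.sqrt Real.pi * (1 / 2 * Real.sqrt Real.pi) = (Real.sqrt Real.pi * Real.sqrt Real.pi) / 2 by ring,
        Real.mul_self_sqrt Real.pi_pos.le]
      linarith [Real.pi_gt_three]
    | (M + 2) =>
      have h1 : ((M:ℝ) + 2 + 1) / 2 = ((M:ℝ) + 1) / 2 + 1 := by ring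
      have h2 : ((M:ℝ) + 2 + 2) / 2 = ((M:ℝ) + 2) / 2 + 1 := by ring
      push_cast
      rw [h1, h2, Real.Gamma_add_one (by positivity), Real.Gamma_add_one (by positivity)]
      have ihM := ih M (by omega)
      have hpos1 : (0:ℝ) < ((M:ℝ) + 1) / 2 := by positivity
      have hg1 : 0 < Real.Gamma (((M:ℝ) + 1) / 2) := Real.Gamma_pos_of_pos hpos1
      have hg2 : 0 < Real.Gamma (((M:ℝ) + 2) / 2) := Real.Gamma_pos_of_pos (by positivity)
      calc ((M:ℝ) + 1) / 2 * Real.Gamma (((M:ℝ) + 1) / 2)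
          ≤ ((M:ℝ) + 1) / 2 * (Real.sqrt Real.pi * Real.Gamma (((M:ℝ) + 2) / 2)) := by
            apply mul_le_mul_of_nonneg_left ihM hpos1.le
        _ ≤ ((M:ℝ) + 2) / 2 * (Real.sqrt Real.pi * Real.Gamma (((M:ℝ) + 2) / 2)) := by
            apply mul_le_mul_of_nonneg_right (by linarith) (by positivity)
        _ = Real.sqrt Real.pi * (((M:ℝ) + 2) / 2 * Real.Gamma (((M:ℝ) + 2) / 2)) := by ring

lemma factorial_le_gamma_sq (M : ℕ) :
    (M ! : ℝ) ≤ 2 ^ M * Real.Gamma (1 + (M:ℝ) / 2) ^ 2 := by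
  have hdup := Real.Gamma_mul_Gamma_add_half (((M:ℝ) + 1) / 2)
  have h2s : 2 * (((M:ℝ) + 1) / 2) = (M:ℝ) + 1 := by ring
  have hsh : ((M:ℝ) + 1) / 2 + 1 / 2 = 1 + (M:ℝ) / 2 := by ring
  rw [h2s, hsh, Real.Gamma_nat_eq_factorial] at hdup
  have hexp : (1:ℝ) - ((M:ℝ) + 1) = -(M:ℝ) := by ring
  rw [hexp] at hdup
  -- hdup : Γ((M+1)/2) * Γ(1 + M/2) = M ! * 2 ^ (-M) * √π  (rpow)
  have hstep : Real.Gamma (((M:ℝ) + 1) / 2) ≤ Real.sqrt Real.pi * Real.Gamma (1 + (M:ℝ) / 2) := by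
    have := gamma_step M
    rwa [show ((M:ℝ) + 2) / 2 = 1 + (M:ℝ) / 2 by ring] at this
  have hg2 : 0 < Real.Gamma (1 + (M:ℝ) / 2) := Real.Gamma_pos_of_pos (by positivity)
  have hfac : (M ! : ℝ) = Real.Gamma (((M:ℝ) + 1) / 2) * Real.Gamma (1 + (M:ℝ) / 2)
      * 2 ^ (M:ℝ) / Real.sqrt Real.pi := by
    rw [hdup]
    have hsqpi : (0:ℝ) < Real.sqrt Real.pi := Real.sqrt_pos.mpr Real.pi_pos
    have h2r : (2:ℝ) ^ (-(M:ℝ)) * (2:ℝ) ^ (M:ℝ) = 1 := by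
      rw [← Real.rpow_add (by norm_num)]
      simp
    field_simp
    exact h2r.symm
  rw [hfac]
  have hsqpi : (0:ℝ) < Real.sqrt Real.pi := Real.sqrt_pos.mpr Real.pi_pos
  rw [div_le_iff₀ hsqpi]
  have h2M : (2:ℝ) ^ (M:ℝ) = (2:ℝ) ^ M := by
    rw [Real.rpow_natCast]
  rw [h2M]
  calc Real.Gamma (((M:ℝ) + 1) / 2) * Real.Gamma (1 + (M:ℝ) / 2) * 2 ^ M
      ≤ (Real.sqrt Real.pi * Real.Gamma (1 + (M:ℝ) / 2)) * Real.Gamma (1 + (M:ℝ) / 2) * 2 ^ M := by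
        apply mul_le_mul_of_nonneg_right (mul_le_mul_of_nonneg_right hstep hg2.le) (by positivity)
    _ = 2 ^ M * Real.Gamma (1 + (M:ℝ) / 2) ^ 2 * Real.sqrt Real.pi := by ring

/-- the final real bound -/
lemma sqrt_bound (M : ℕ) :
    Real.sqrt (Real.pi * (M ! : ℝ) / 2)
      ≤ Real.sqrt (Real.pi / 2) * (2:ℝ) ^ ((M:ℝ) / 2) * Real.Gamma (1 + (M:ℝ) / 2) := by
  have hg2 : 0 < Real.Gamma (1 + (M:ℝ) / 2) := Real.Gamma_pos_of_pos (by positivity)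
  have h2half : (2:ℝ) ^ ((M:ℝ) / 2) = Real.sqrt ((2:ℝ) ^ M) := by
    rw [Real.sqrt_eq_rpow, ← Real.rpow_natCast 2 M, ← Real.rpow_mul (by norm_num)]
    congr 1
    ring
  have hrhs : Real.sqrt (Real.pi / 2) * (2:ℝ) ^ ((M:ℝ) / 2) * Real.Gamma (1 + (M:ℝ) / 2)
      = Real.sqrt (Real.pi / 2 * 2 ^ M * Real.Gamma (1 + (M:ℝ) / 2) ^ 2) := by
    rw [Real.sqrt_mul (by positivity), Real.sqrt_mul (by positivity), ← h2half,
      Real.sqrt_sq hg2.le]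
  rw [hrhs]
  apply Real.sqrt_le_sqrt
  have := factorial_le_gamma_sq M
  nlinarith [Real.pi_pos, this]

end Stmt1Aux

namespace Stmt1Aux

lemma He_eq (n : ℕ) (x : ℝ) : He n x = (H n).eval x := by
  have hfun : (fun y : ℝ => Real.exp (-(y ^ 2) / 2)) = fun y : ℝ => Real.exp (-(y ^ 2 / 2)) := by
    funext y; rw [neg_div]
  rw [He, hfun, iteratedDeriv_eq_iterate, Polynomial.deriv_gaussian_eq_hermite_mul_gaussian]
  have haev : (Polynomial.aeval x) (hermite n) = (H n).eval x := by
    rw [H, Polynomial.aeval_def, ← Polynomial.eval_map]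
    rfl
  rw [← haev]
  have hexp : Real.exp (x ^ 2 / 2) * Real.exp (-(x ^ 2 / 2)) = 1 := by
    rw [← Real.exp_add]; simp
  have h2 : ((-1:ℝ) ^ n) * ((-1:ℝ) ^ n) = 1 := by
    rw [← pow_add, ← two_mul, pow_mul]; norm_num
  calc (-1:ℝ) ^ n * Real.exp (x ^ 2 / 2) * ((-1:ℝ) ^ n * (Polynomial.aeval x) (hermite n)
        * Real.exp (-(x ^ 2 / 2)))
      = (((-1:ℝ) ^ n) * ((-1:ℝ) ^ n)) * (Real.exp (x ^ 2 / 2) * Real.exp (-(x ^ 2 / 2)))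
        * (Polynomial.aeval x) (hermite n) := by ring
    _ = (Polynomial.aeval x) (hermite n) := by rw [h2, hexp]; ring

/-- complex integrand -/
noncomputable def pgc (p : ℝ[X]) (t : ℝ) (ω : ℝ) : ℂ :=
  (pg p ω : ℂ) * Complex.exp (Complex.I * (t : ℂ) * (ω : ℂ))

lemma norm_pgc (p : ℝ[X]) (t ω : ℝ) : ‖pgc p t ω‖ = |pg p ω| := by
  rw [pgc, norm_mul, Complex.norm_real]
  have : Complex.I * (t : ℂ) * (ω : ℂ) = ((t * ω : ℝ) : ℂ) * Complex.I := by
    push_cast; ring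
  rw [this, Complex.norm_exp_ofReal_mul_I, mul_one, Real.norm_eq_abs]

lemma integrableOn_pgc (p : ℝ[X]) (t : ℝ) : IntegrableOn (pgc p t) (Ioi (0:ℝ)) := by
  have hmeas : AEStronglyMeasurable (pgc p t) (volume.restrict (Ioi (0:ℝ))) := by
    apply Continuous.aestronglyMeasurable
    have hc : Continuous fun x : ℝ => p.eval x * Real.exp (-x ^ 2 / 2) :=
      (Polynomial.continuous p).mul (Real.continuous_exp.comp (by continuity))
    exact (Complex.continuous_ofReal.comp hc).mul (Complex.continuous_exp.comp (by continuity))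
  refine Integrable.mono' ((integrable_pg p).abs.integrableOn) hmeas ?_
  exact Filter.Eventually.of_forall fun ω => (norm_pgc p t ω).le

lemma hasDerivAt_pgc (p : ℝ[X]) (t : ℝ) (ω : ℝ) :
    HasDerivAt (pgc p t)
      (pgc (derivative p - X * p) t ω + Complex.I * (t : ℂ) * pgc p t ω) ω := by
  have h1 : HasDerivAt (fun ω : ℝ => ((pg p ω : ℝ) : ℂ))
      ((pg (derivative p - X * p) ω : ℂ)) ω := (hasDerivAt_pg p ω).ofReal_comp
  have hlin : HasDerivAt (fun ω : ℝ => Complex.I * (t : ℂ) * (ω : ℂ))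
      (Complex.I * (t : ℂ)) ω := by
    simpa using (Complex.ofRealCLM.hasDerivAt (x := ω)).const_mul (Complex.I * (t : ℂ))
  have h2 : HasDerivAt (fun ω : ℝ => Complex.exp (Complex.I * (t : ℂ) * (ω : ℂ)))
      (Complex.exp (Complex.I * (t : ℂ) * (ω : ℂ)) * (Complex.I * (t : ℂ))) ω := hlin.cexp
  have := h1.mul h2
  exact this.congr_deriv (by simp only [pgc]; ring)

lemma tendsto_pgc (p : ℝ[X]) (t : ℝ) : Tendsto (pgc p t) atTop (nhds 0) := by
  rw [tendsto_zero_iff_norm_tendsto_zero]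
  have : (fun ω => ‖pgc p t ω‖) = fun ω => |pg p ω| := by
    funext ω; exact norm_pgc p t ω
  rw [this]
  simpa using (tendsto_pg_top p).abs

lemma calI_eq (n : ℕ) (t : ℝ) : calI n t = ∫ ω in Ioi (0:ℝ), pgc (H n) t ω := by
  rw [calI]
  apply MeasureTheory.integral_congr_ae
  refine Filter.Eventually.of_forall fun ω => ?_
  dsimp only
  rw [pgc, pg, He_eq]
  push_cast
  ring

lemma calI_succ (n : ℕ) (t : ℝ) :
    calI (n + 1) t = ((Polynomial.eval (0:ℝ) (H n) : ℝ) : ℂ) + Complex.I * (t : ℂ) * calI n t := by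
  have hftc : ∫ ω in Ioi (0:ℝ),
        (pgc (derivative (H n) - X * H n) t ω + Complex.I * (t : ℂ) * pgc (H n) t ω)
      = 0 - pgc (H n) t 0 := by
    refine integral_Ioi_of_hasDerivAt_of_tendsto
      (hasDerivAt_pgc (H n) t 0).continuousAt.continuousWithinAt
      (fun x _ => hasDerivAt_pgc (H n) t x) ?_ (tendsto_pgc (H n) t)
    exact (integrableOn_pgc _ t).add (((integrableOn_pgc _ t)).const_mul _)
  rw [MeasureTheory.integral_add (integrableOn_pgc _ t)
    ((integrableOn_pgc _ t).const_mul _), MeasureTheory.integral_const_mul] at hftc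
  have hneg : derivative (H n) - X * H n = -(H (n + 1)) := by
    rw [H_succ]; ring
  have hint1 : ∫ ω in Ioi (0:ℝ), pgc (derivative (H n) - X * H n) t ω = -(calI (n + 1) t) := by
    rw [hneg, calI_eq]
    rw [← MeasureTheory.integral_neg]
    apply MeasureTheory.integral_congr_ae
    refine Filter.Eventually.of_forall fun ω => ?_
    simp only [pgc, pg, eval_neg]
    push_cast
    ring
  have hpgc0 : pgc (H n) t 0 = ((Polynomial.eval (0:ℝ) (H n) : ℝ) : ℂ) := by
    simp [pgc, pg]
  rw [hint1, ← calI_eq, hpgc0] at hftc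
  have := hftc
  linear_combination -this

end Stmt1Aux

namespace Stmt1Aux

lemma odf : ∀ l : ℕ, oddDoubleFactorial l = (2 * l - 1)‼
  | 0 => rfl
  | (l+1) => by
    have h0 : oddDoubleFactorial (l+1) = oddDoubleFactorial l * (2 * l + 1) :=
      Finset.prod_range_succ _ _
    rw [h0, odf l]
    cases l with
    | zero => rfl
    | succ k =>
      have h1 : 2 * (k+1) - 1 = 2 * k + 1 := by omega
      have h2 : 2 * (k+1+1) - 1 = (2 * k + 1) + 2 := by omega
      have h3 : 2 * (k + 1) + 1 = 2 * k + 1 + 2 := by ring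
      rw [h1, h2, h3, Nat.doubleFactorial_add_two]
      ring

lemma H_eval_zero_odd {n : ℕ} (h : Odd n) : Polynomial.eval (0:ℝ) (H n) = 0 := by
  rw [← Polynomial.coeff_zero_eq_eval_zero, H_coeff,
    coeff_hermite_of_odd_add (by simpa using h)]
  norm_num

lemma H_eval_zero_even (m : ℕ) :
    Polynomial.eval (0:ℝ) (H (2 * m)) = (-1) ^ m * (oddDoubleFactorial m : ℝ) := by
  rw [← Polynomial.coeff_zero_eq_eval_zero, H_coeff]
  have h := Polynomial.coeff_hermite_explicit m 0
  rw [Nat.add_zero] at h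
  rw [h, odf m]
  push_cast
  simp

noncomputable def S (M n : ℕ) (t : ℝ) : ℂ :=
  calI n t + Complex.I ^ ((n : ℤ) - 1) *
    ∑ l ∈ Finset.Icc ((n + 1) / 2) ((M - 1) / 2),
      (oddDoubleFactorial l : ℂ) / (t : ℂ) ^ (2 * l - n + 1)

lemma S_step (M n : ℕ) (hn : n < M) (t : ℝ) (ht : 0 < t) :
    Complex.I * (t : ℂ) * S M n t = S M (n + 1) t := by
  have htne : (t : ℂ) ≠ 0 := by exact_mod_cast ht.ne'
  have hz : ((n + 1 : ℕ) : ℤ) - 1 = (n : ℤ) := by push_cast; ring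
  have hIz : Complex.I * Complex.I ^ ((n : ℤ) - 1) = Complex.I ^ (n : ℕ) := by
    have hd : Complex.I ^ ((n : ℤ) - 1) = Complex.I ^ ((n : ℤ)) / Complex.I := by
      rw [zpow_sub₀ Complex.I_ne_zero, zpow_one]
    rw [hd, zpow_natCast, mul_comm, div_mul_cancel₀ _ Complex.I_ne_zero]
  rw [S, S, calI_succ n t, hz, zpow_natCast]
  have htA : (t : ℂ) * ∑ l ∈ Finset.Icc ((n + 1) / 2) ((M - 1) / 2),
        (oddDoubleFactorial l : ℂ) / (t : ℂ) ^ (2 * l - n + 1)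
      = ∑ l ∈ Finset.Icc ((n + 1) / 2) ((M - 1) / 2),
        (oddDoubleFactorial l : ℂ) / (t : ℂ) ^ (2 * l - n) := by
    rw [Finset.mul_sum]
    refine Finset.sum_congr rfl fun l hl => ?_
    rw [pow_succ]
    field_simp
  have hmain : Complex.I ^ (n : ℕ) * ∑ l ∈ Finset.Icc ((n + 1) / 2) ((M - 1) / 2),
        (oddDoubleFactorial l : ℂ) / (t : ℂ) ^ (2 * l - n)
      = ((Polynomial.eval (0:ℝ) (H n) : ℝ) : ℂ)
        + Complex.I ^ (n : ℕ) * ∑ l ∈ Finset.Icc ((n + 1 + 1) / 2) ((M - 1) / 2),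
          (oddDoubleFactorial l : ℂ) / (t : ℂ) ^ (2 * l - (n + 1) + 1) := by
    rcases Nat.even_or_odd n with he | ho
    · obtain ⟨m, hm⟩ := he
      have hm2 : n = 2 * m := by omega
      subst hm2
      rw [H_eval_zero_even m]
      rw [show (2 * m + 1) / 2 = m by omega, show (2 * m + 1 + 1) / 2 = m + 1 by omega]
      have hmD : m ≤ (M - 1) / 2 := by omega
      rw [← Finset.Ioc_insert_left hmD, Finset.sum_insert (by simp),
        show 2 * m - 2 * m = 0 by omega, pow_zero, div_one]
      have hsum : ∑ l ∈ Finset.Ioc m ((M - 1) / 2),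
            (oddDoubleFactorial l : ℂ) / (t : ℂ) ^ (2 * l - 2 * m)
          = ∑ l ∈ Finset.Icc (m + 1) ((M - 1) / 2),
            (oddDoubleFactorial l : ℂ) / (t : ℂ) ^ (2 * l - (2 * m + 1) + 1) := by
        rw [← Finset.Icc_add_one_left_eq_Ioc]
        refine Finset.sum_congr rfl fun l hl => ?_
        have hl' := Finset.mem_Icc.mp hl
        have hexp : 2 * l - 2 * m = 2 * l - (2 * m + 1) + 1 := by omega
        rw [hexp]
      rw [hsum]
      have hI2m : Complex.I ^ (2 * m) = (-1 : ℂ) ^ m := by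
        rw [pow_mul, Complex.I_sq]
      rw [hI2m]
      push_cast
      ring
    · rw [H_eval_zero_odd ho]
      obtain ⟨m, hm⟩ := ho
      subst hm
      rw [show (2 * m + 1 + 1) / 2 = m + 1 by omega,
        show (2 * m + 1 + 1 + 1) / 2 = m + 1 by omega]
      have hsum : ∑ l ∈ Finset.Icc (m + 1) ((M - 1) / 2),
            (oddDoubleFactorial l : ℂ) / (t : ℂ) ^ (2 * l - (2 * m + 1))
          = ∑ l ∈ Finset.Icc (m + 1) ((M - 1) / 2),
            (oddDoubleFactorial l : ℂ) / (t : ℂ) ^ (2 * l - (2 * m + 1 + 1) + 1) := by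
        refine Finset.sum_congr rfl fun l hl => ?_
        have hl' := Finset.mem_Icc.mp hl
        have hexp : 2 * l - (2 * m + 1) = 2 * l - (2 * m + 1 + 1) + 1 := by omega
        rw [hexp]
      rw [hsum]
      push_cast
      ring
  calc Complex.I * (t : ℂ) * (calI n t + Complex.I ^ ((n : ℤ) - 1)
        * ∑ l ∈ Finset.Icc ((n + 1) / 2) ((M - 1) / 2),
          (oddDoubleFactorial l : ℂ) / (t : ℂ) ^ (2 * l - n + 1))
      = Complex.I * (t : ℂ) * calI n t
        + (Complex.I * Complex.I ^ ((n : ℤ) - 1))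
          * ((t : ℂ) * ∑ l ∈ Finset.Icc ((n + 1) / 2) ((M - 1) / 2),
            (oddDoubleFactorial l : ℂ) / (t : ℂ) ^ (2 * l - n + 1)) := by ring
    _ = Complex.I * (t : ℂ) * calI n t
        + (Complex.I ^ (n : ℕ) * ∑ l ∈ Finset.Icc ((n + 1) / 2) ((M - 1) / 2),
          (oddDoubleFactorial l : ℂ) / (t : ℂ) ^ (2 * l - n)) := by rw [hIz, htA]
    _ = Complex.I * (t : ℂ) * calI n t + (((Polynomial.eval (0:ℝ) (H n) : ℝ) : ℂ)
        + Complex.I ^ (n : ℕ) * ∑ l ∈ Finset.Icc ((n + 1 + 1) / 2) ((M - 1) / 2),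
          (oddDoubleFactorial l : ℂ) / (t : ℂ) ^ (2 * l - (n + 1) + 1)) := by rw [hmain]
    _ = _ := by ring

lemma S_iter (M : ℕ) (t : ℝ) (ht : 0 < t) :
    ∀ d n, n + d = M → (Complex.I * (t : ℂ)) ^ d * S M n t = S M M t := by
  intro d
  induction d with
  | zero =>
    intro n h
    have : n = M := by omega
    subst this
    simp
  | succ d ih =>
    intro n h
    have hn : n < M := by omega
    calc (Complex.I * (t : ℂ)) ^ (d + 1) * S M n t
        = (Complex.I * (t : ℂ)) ^ d * (Complex.I * (t : ℂ) * S M n t) := by ring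
      _ = (Complex.I * (t : ℂ)) ^ d * S M (n + 1) t := by rw [S_step M n hn t ht]
      _ = S M M t := ih (n + 1) (by omega)

lemma S_self (M : ℕ) (hM : 0 < M) (t : ℝ) : S M M t = calI M t := by
  rw [S]
  have hempty : Finset.Icc ((M + 1) / 2) ((M - 1) / 2) = ∅ :=
    Finset.Icc_eq_empty (by omega)
  rw [hempty]
  simp

lemma norm_calI_le (M : ℕ) (t : ℝ) :
    ‖calI M t‖ ≤ Real.sqrt (Real.pi * (M ! : ℝ) / 2) := by
  rw [calI_eq]
  calc ‖∫ ω in Ioi (0:ℝ), pgc (H M) t ω‖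
      ≤ ∫ ω in Ioi (0:ℝ), ‖pgc (H M) t ω‖ := MeasureTheory.norm_integral_le_integral_norm _
    _ = ∫ ω in Ioi (0:ℝ), |pg (H M) ω| := by
        apply MeasureTheory.integral_congr_ae
        exact Filter.Eventually.of_forall fun ω => norm_pgc _ _ ω
    _ ≤ _ := integral_abs_pg_le M

end Stmt1Aux

end Stmt1AuxSection

theorem stmt_1 (n M : ℕ) (hnM : n < M) (t : ℝ) (ht : 0 < t) :
    ‖calI n t + Complex.I ^ ((n : ℤ) - 1) *
        ∑ l ∈ Finset.Icc ((n + 1) / 2) ((M - 1) / 2),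
          (oddDoubleFactorial l : ℂ) / (t : ℂ) ^ (2 * l - n + 1)‖ ≤
      Real.sqrt (Real.pi / 2) * t ^ ((n : ℤ) - (M : ℤ)) * (2 : ℝ) ^ ((M : ℝ) / 2) *
        Real.Gamma (1 + (M : ℝ) / 2) := by
  have hkey := Stmt1Aux.S_iter M t ht (M - n) n (by omega)
  rw [Stmt1Aux.S_self M (by omega) t] at hkey
  have hSgoal : calI n t + Complex.I ^ ((n : ℤ) - 1) *
      ∑ l ∈ Finset.Icc ((n + 1) / 2) ((M - 1) / 2),
        (oddDoubleFactorial l : ℂ) / (t : ℂ) ^ (2 * l - n + 1) = Stmt1Aux.S M n t := rfl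
  rw [hSgoal]
  have hnormIt : ‖Complex.I * (t : ℂ)‖ = t := by
    rw [norm_mul, Complex.norm_I, one_mul, Complex.norm_real, Real.norm_eq_abs, abs_of_pos ht]
  have htpow : 0 < t ^ (M - n) := pow_pos ht _
  have h1 : t ^ (M - n) * ‖Stmt1Aux.S M n t‖ = ‖calI M t‖ := by
    rw [← hkey, norm_mul, norm_pow, hnormIt]
  have h2 : ‖Stmt1Aux.S M n t‖ = ‖calI M t‖ * (t ^ (M - n))⁻¹ := by
    rw [← h1, mul_comm (t ^ (M - n)), mul_assoc, mul_inv_cancel₀ htpow.ne', mul_one]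
  have hB := (Stmt1Aux.norm_calI_le M t).trans (Stmt1Aux.sqrt_bound M)
  have hzp : t ^ ((n : ℤ) - (M : ℤ)) = (t ^ (M - n))⁻¹ := by
    rw [show (n : ℤ) - (M : ℤ) = -(((M - n : ℕ) : ℤ)) by push_cast [Nat.cast_sub hnM.le]; ring,
      zpow_neg, zpow_natCast]
  rw [h2]
  calc ‖calI M t‖ * (t ^ (M - n))⁻¹
      ≤ (Real.sqrt (Real.pi / 2) * (2 : ℝ) ^ ((M : ℝ) / 2) * Real.Gamma (1 + (M : ℝ) / 2))
          * (t ^ (M - n))⁻¹ :=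
        mul_le_mul_of_nonneg_right hB (by positivity)
    _ = Real.sqrt (Real.pi / 2) * t ^ ((n : ℤ) - (M : ℤ)) * (2 : ℝ) ^ ((M : ℝ) / 2)
          * Real.Gamma (1 + (M : ℝ) / 2) := by
        rw [hzp]; ring
end

section
/- For every integer n ≥ 0 and every nonzero real t, integration by parts yields 𝓘ₙ(t) = (1/(it)) · (𝓘_{n+1}(t) − Heₙ(0)). -/
open MeasureTheory

open Polynomial Filter Real in
lemma He_eq_aeval (n : ℕ) (x : ℝ) : He n x = aeval x (hermite n) := by
  have hfun : (fun y : ℝ => Real.exp (-(y ^ 2) / 2)) = fun y => Real.exp (-(y ^ 2 / 2)) := by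
    funext y; ring_nf
  rw [He, hfun, iteratedDeriv_eq_iterate, deriv_gaussian_eq_hermite_mul_gaussian]
  have h1 : Real.exp (x ^ 2 / 2) * Real.exp (-(x ^ 2 / 2)) = 1 := by
    rw [← Real.exp_add]; simp
  have h2 : ((-1 : ℝ)) ^ n * ((-1 : ℝ)) ^ n = 1 := by
    rw [← mul_pow]; norm_num
  calc (-1 : ℝ) ^ n * Real.exp (x ^ 2 / 2) *
        ((-1 : ℝ) ^ n * aeval x (hermite n) * Real.exp (-(x ^ 2 / 2)))
      = ((-1 : ℝ) ^ n * (-1 : ℝ) ^ n) * (Real.exp (x ^ 2 / 2) * Real.exp (-(x ^ 2 / 2))) *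
          aeval x (hermite n) := by ring
    _ = aeval x (hermite n) := by rw [h1, h2]; ring

open Polynomial in
lemma hasDerivAt_gauss (x : ℝ) :
    HasDerivAt (fun y : ℝ => Real.exp (-(y ^ 2) / 2)) (-x * Real.exp (-(x ^ 2) / 2)) x := by
  have h1 : HasDerivAt (fun y : ℝ => -(y ^ 2) / 2) (-x) x := by
    have := ((hasDerivAt_pow 2 x).neg.div_const 2)
    refine this.congr_deriv ?_
    push_cast; ring
  simpa [mul_comm] using h1.exp

open Polynomial in
lemma hasDerivAt_He_gauss (n : ℕ) (x : ℝ) :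
    HasDerivAt (fun y => He n y * Real.exp (-(y ^ 2) / 2))
      (-(He (n + 1) x * Real.exp (-(x ^ 2) / 2))) x := by
  simp only [He_eq_aeval]
  have hp : HasDerivAt (fun y : ℝ => (aeval y (hermite n) : ℝ))
      (aeval x (derivative (hermite n))) x := by
    simpa [Polynomial.deriv_aeval] using (Polynomial.differentiable_aeval
      (hermite n)).differentiableAt.hasDerivAt (x := x) |>.congr_deriv (by
        rw [Polynomial.deriv_aeval])
  have := hp.mul (hasDerivAt_gauss x)
  refine this.congr_deriv ?_
  rw [hermite_succ]
  simp only [map_sub, map_mul, aeval_X]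
  ring

open Polynomial Filter in
lemma tendsto_poly_gauss (p : Polynomial ℤ) :
    Tendsto (fun x : ℝ => (aeval x p : ℝ) * Real.exp (-(x ^ 2) / 2)) atTop (nhds 0) := by
  induction p using Polynomial.induction_on' with
  | add p q hp hq =>
      have := hp.add hq
      simp only [map_add, add_mul, add_zero] at this ⊢
      exact this
  | monomial k a =>
      simp only [aeval_monomial, map_pow, aeval_X]
      have h0 : Tendsto (fun x : ℝ => Real.exp (-(1/2) * x)) atTop (nhds 0) := by
        have : Tendsto (fun x : ℝ => -(1/2) * x) atTop atBot :=
          Filter.Tendsto.const_mul_atTop_of_neg (by norm_num) tendsto_id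
        exact Real.tendsto_exp_atBot.comp this
      have h := ((rpow_mul_exp_neg_mul_sq_isLittleO_exp_neg (b := 1/2) (by norm_num)
        (k : ℝ)).isBigO.trans_tendsto h0)
      have h2 : Tendsto (fun x : ℝ => x ^ k * Real.exp (-(x ^ 2) / 2)) atTop (nhds 0) := by
        apply h.congr'
        filter_upwards [Filter.eventually_gt_atTop (0 : ℝ)] with x hx
        rw [Real.rpow_natCast]
        ring_nf
      have := h2.const_mul ((algebraMap ℤ ℝ) a)
      simpa [mul_assoc] using this

open Polynomial Filter Real in
lemma integrableOn_poly_gauss (p : Polynomial ℤ) :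
    IntegrableOn (fun x : ℝ => (aeval x p : ℝ) * Real.exp (-(x ^ 2) / 2)) (Set.Ioi 0) := by
  induction p using Polynomial.induction_on' with
  | add p q hp hq =>
      have := hp.add hq
      simp only [map_add, add_mul] at this ⊢
      exact this
  | monomial k a =>
      simp only [aeval_monomial, map_pow, aeval_X]
      have h := (integrableOn_rpow_mul_exp_neg_mul_sq (b := 1/2) (by norm_num)
        (s := (k : ℝ)) (lt_of_lt_of_le neg_one_lt_zero (Nat.cast_nonneg k))).const_mul
        ((algebraMap ℤ ℝ) a)
      refine (MeasureTheory.IntegrableOn.congr_fun h (fun x hx => ?_) measurableSet_Ioi)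
      rw [Real.rpow_natCast]
      ring_nf

lemma continuous_He (n : ℕ) : Continuous (He n) := by
  simp only [funext (He_eq_aeval n)]
  exact (Polynomial.hermite n).continuous_aeval

theorem stmt_2 (n : ℕ) (t : ℝ) (ht : t ≠ 0) :
    calI n t = 1 / (Complex.I * (t : ℂ)) * (calI (n + 1) t - (He n 0 : ℂ)) := by
  have hIt : Complex.I * (t : ℂ) ≠ 0 :=
    mul_ne_zero Complex.I_ne_zero (by exact_mod_cast ht)
  set u : ℝ → ℂ := fun ω => ((He n ω * Real.exp (-(ω ^ 2) / 2) : ℝ) : ℂ) with hu_def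
  set u' : ℝ → ℂ := fun ω => ((-(He (n + 1) ω * Real.exp (-(ω ^ 2) / 2)) : ℝ) : ℂ) with hu'_def
  set v : ℝ → ℂ := fun ω => Complex.exp (Complex.I * (t : ℂ) * (ω : ℂ)) with hv_def
  set v' : ℝ → ℂ := fun ω =>
    Complex.I * (t : ℂ) * Complex.exp (Complex.I * (t : ℂ) * (ω : ℂ)) with hv'_def
  have hcu : Continuous u := by
    apply Complex.continuous_ofReal.comp
    exact (continuous_He n).mul (Real.continuous_exp.comp (by continuity))
  have hcu' : Continuous u' := by
    apply Complex.continuous_ofReal.comp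
    exact ((continuous_He (n + 1)).mul (Real.continuous_exp.comp (by continuity))).neg
  have hcv : Continuous v := by
    apply Complex.continuous_exp.comp
    exact (continuous_const.mul Complex.continuous_ofReal)
  have hcv' : Continuous v' := by
    apply Continuous.mul continuous_const
    apply Complex.continuous_exp.comp
    exact (continuous_const.mul Complex.continuous_ofReal)
  have hu : ∀ x ∈ Set.Ioi (0 : ℝ), HasDerivAt u (u' x) x := fun x _ =>
    (hasDerivAt_He_gauss n x).ofReal_comp
  have hv : ∀ x ∈ Set.Ioi (0 : ℝ), HasDerivAt v (v' x) x := by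
    intro x _
    have h1 : HasDerivAt (fun y : ℝ => Complex.I * (t : ℂ) * (y : ℂ))
        (Complex.I * (t : ℂ)) x := by
      simpa using ((hasDerivAt_id x).ofReal_comp.const_mul (Complex.I * (t : ℂ)))
    simpa [hv_def, hv'_def, mul_comm, mul_assoc, mul_left_comm] using h1.cexp
  have hnorm_v : ∀ x : ℝ, ‖v x‖ = 1 := by
    intro x
    rw [hv_def]
    rw [Complex.norm_exp]
    norm_num [mul_assoc, mul_comm]
  have hnu : ∀ x : ℝ, ‖u x‖ = ‖He n x * Real.exp (-(x ^ 2) / 2)‖ := fun x =>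
    Complex.norm_real _
  have hnu' : ∀ x : ℝ, ‖u' x‖ = ‖He (n + 1) x * Real.exp (-(x ^ 2) / 2)‖ := by
    intro x
    rw [hu'_def]
    rw [Complex.norm_real, norm_neg]
  have hnv' : ∀ x : ℝ, ‖v' x‖ = ‖Complex.I * (t : ℂ)‖ := by
    intro x
    rw [hv'_def, norm_mul,
      show Complex.exp (Complex.I * (t : ℂ) * (x : ℂ)) = v x from rfl, hnorm_v x, mul_one]
  have hbase : IntegrableOn (fun x : ℝ => He (n + 1) x * Real.exp (-(x ^ 2) / 2))
      (Set.Ioi 0) := by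
    simpa only [He_eq_aeval] using integrableOn_poly_gauss (Polynomial.hermite (n + 1))
  have hbase0 : IntegrableOn (fun x : ℝ => He n x * Real.exp (-(x ^ 2) / 2))
      (Set.Ioi 0) := by
    simpa only [He_eq_aeval] using integrableOn_poly_gauss (Polynomial.hermite n)
  have hint1 : IntegrableOn (u * v') (Set.Ioi 0) := by
    apply Integrable.mono' ((hbase0.norm).const_mul ‖Complex.I * (t : ℂ)‖)
    · exact (hcu.mul hcv').aestronglyMeasurable.restrict
    · filter_upwards with x
      rw [Pi.mul_apply, norm_mul, hnu x, hnv' x, mul_comm]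
  have hint2 : IntegrableOn (u' * v) (Set.Ioi 0) := by
    apply Integrable.mono' hbase.norm
    · exact (hcu'.mul hcv).aestronglyMeasurable.restrict
    · filter_upwards with x
      rw [Pi.mul_apply, norm_mul, hnu' x, hnorm_v x, mul_one]
  have hzero : Filter.Tendsto (u * v) (nhdsWithin 0 (Set.Ioi 0))
      (nhds ((He n 0 : ℝ) : ℂ)) := by
    have h1 : Filter.Tendsto (u * v) (nhds 0) (nhds (u 0 * v 0)) := ((hcu.mul hcv).tendsto 0)
    have h0 : u 0 * v 0 = ((He n 0 : ℝ) : ℂ) := by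
      simp [hu_def, hv_def]
    exact h0 ▸ h1.mono_left nhdsWithin_le_nhds
  have hinfty : Filter.Tendsto (u * v) Filter.atTop (nhds (0 : ℂ)) := by
    apply squeeze_zero_norm (a := fun x : ℝ => ‖He n x * Real.exp (-(x ^ 2) / 2)‖)
    · intro x
      rw [Pi.mul_apply, norm_mul, hnu x, hnorm_v x, mul_one]
    · have := (tendsto_poly_gauss (Polynomial.hermite n)).norm
      simp only [norm_zero] at this
      simpa only [He_eq_aeval] using this
  have key := MeasureTheory.integral_Ioi_mul_deriv_eq_deriv_mul hu hv hint1 hint2 hzero hinfty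
  have hL : ∫ x in Set.Ioi (0 : ℝ), u x * v' x = Complex.I * (t : ℂ) * calI n t := by
    rw [calI, ← MeasureTheory.integral_const_mul]
    apply MeasureTheory.setIntegral_congr_fun measurableSet_Ioi
    intro x _
    simp only [hu_def, hv'_def]
    push_cast [Complex.ofReal_exp]
    ring_nf
  have hR : ∫ x in Set.Ioi (0 : ℝ), u' x * v x = -calI (n + 1) t := by
    rw [calI, ← MeasureTheory.integral_neg]
    apply MeasureTheory.setIntegral_congr_fun measurableSet_Ioi
    intro x _
    simp only [hu'_def, hv_def]
    push_cast [Complex.ofReal_exp]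
    ring_nf
  rw [hL, hR] at key
  rw [one_div, eq_inv_mul_iff_mul_eq₀ hIt]
  linear_combination key
end

section
/- For all real r ≥ 0 and ω ≥ 0 there holds |ω J₀(rω) − [(15/64·r⁴ − 3/4·r² + 1)·He₁(ω) + (5/32·r⁴ − 1/4·r²)·He₃(ω) + (1/64)·r⁴·He₅(ω)]| ≤ ω⁷ r⁶ / 720. -/
open MeasureTheory

/-- Bessel function of the first kind of order 0: `J₀(x) = (1/π)∫₀^π cos(x sin φ) dφ`. -/
noncomputable def J0 (x : ℝ) : ℝ :=
  (1 / Real.pi) * ∫ φ in (0 : ℝ)..Real.pi, Real.cos (x * Real.sin φ)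

/-! ### auxiliary: nonnegativity from derivative -/

lemma aux_nonneg_of_deriv (f : ℝ → ℝ) (hf : Differentiable ℝ f) (h0 : f 0 = 0)
    (hd : ∀ t, 0 ≤ t → 0 ≤ deriv f t) : ∀ t, 0 ≤ t → 0 ≤ f t := by
  intro t ht
  have hmono : MonotoneOn f (Set.Ici 0) := by
    apply monotoneOn_of_deriv_nonneg (convex_Ici 0) hf.continuous.continuousOn
      (hf.differentiableOn.mono interior_subset)
    intro x hx
    exact hd x (le_of_lt (by simpa using hx))
  have := hmono (Set.self_mem_Ici) (Set.mem_Ici.mpr ht) ht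
  linarith [h0 ▸ this]

lemma aux_f2 (t : ℝ) (ht : 0 ≤ t) : 0 ≤ Real.cos t - 1 + t ^ 2 / 2 := by
  apply aux_nonneg_of_deriv (fun t => Real.cos t - 1 + t ^ 2 / 2) (by fun_prop) (by norm_num)
    _ t ht
  intro s hs
  have : deriv (fun t : ℝ => Real.cos t - 1 + t ^ 2 / 2) s = -Real.sin s + s := by
    have : HasDerivAt (fun t : ℝ => Real.cos t - 1 + t ^ 2 / 2) (-Real.sin s + s) s := by
      have h1 := (Real.hasDerivAt_cos s).sub_const 1
      have h2 := (hasDerivAt_pow 2 s).div_const 2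
      exact (h1.add h2).congr_deriv (by simp)
    exact this.deriv
  rw [this]
  have := Real.sin_le hs
  linarith

lemma aux_f3 (t : ℝ) (ht : 0 ≤ t) : 0 ≤ Real.sin t - t + t ^ 3 / 6 := by
  apply aux_nonneg_of_deriv (fun t => Real.sin t - t + t ^ 3 / 6) (by fun_prop) (by norm_num)
    _ t ht
  intro s hs
  have hder : HasDerivAt (fun t : ℝ => Real.sin t - t + t ^ 3 / 6)
      (Real.cos s - 1 + s ^ 2 / 2) s := by
    have h1 := (Real.hasDerivAt_sin s).sub (hasDerivAt_id s)
    have h2 := (hasDerivAt_pow 3 s).div_const 6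
    have := h1.add h2
    exact this.congr_deriv (by simp; ring)
  rw [hder.deriv]
  exact aux_f2 s hs

lemma aux_f4 (t : ℝ) (ht : 0 ≤ t) : 0 ≤ 1 - t ^ 2 / 2 + t ^ 4 / 24 - Real.cos t := by
  apply aux_nonneg_of_deriv (fun t => 1 - t ^ 2 / 2 + t ^ 4 / 24 - Real.cos t) (by fun_prop)
    (by norm_num) _ t ht
  intro s hs
  have hder : HasDerivAt (fun t : ℝ => 1 - t ^ 2 / 2 + t ^ 4 / 24 - Real.cos t)
      (Real.sin s - s + s ^ 3 / 6) s := by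
    have h1 := ((hasDerivAt_pow 2 s).div_const 2).const_sub 1
    have h2 := (hasDerivAt_pow 4 s).div_const 24
    have := (h1.add h2).sub (Real.hasDerivAt_cos s)
    exact this.congr_deriv (by simp; ring)
  rw [hder.deriv]
  exact aux_f3 s hs

lemma aux_f5 (t : ℝ) (ht : 0 ≤ t) : 0 ≤ t - t ^ 3 / 6 + t ^ 5 / 120 - Real.sin t := by
  apply aux_nonneg_of_deriv (fun t => t - t ^ 3 / 6 + t ^ 5 / 120 - Real.sin t) (by fun_prop)
    (by norm_num) _ t ht
  intro s hs
  have hder : HasDerivAt (fun t : ℝ => t - t ^ 3 / 6 + t ^ 5 / 120 - Real.sin t)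
      (1 - s ^ 2 / 2 + s ^ 4 / 24 - Real.cos s) s := by
    have h1 := (hasDerivAt_id s).sub ((hasDerivAt_pow 3 s).div_const 6)
    have h2 := (hasDerivAt_pow 5 s).div_const 120
    have := (h1.add h2).sub (Real.hasDerivAt_sin s)
    exact this.congr_deriv (by simp; ring)
  rw [hder.deriv]
  exact aux_f4 s hs

lemma aux_f6 (t : ℝ) (ht : 0 ≤ t) :
    0 ≤ Real.cos t - 1 + t ^ 2 / 2 - t ^ 4 / 24 + t ^ 6 / 720 := by
  apply aux_nonneg_of_deriv (fun t => Real.cos t - 1 + t ^ 2 / 2 - t ^ 4 / 24 + t ^ 6 / 720)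
    (by fun_prop) (by norm_num) _ t ht
  intro s hs
  have hder : HasDerivAt (fun t : ℝ => Real.cos t - 1 + t ^ 2 / 2 - t ^ 4 / 24 + t ^ 6 / 720)
      (s - s ^ 3 / 6 + s ^ 5 / 120 - Real.sin s) s := by
    have h1 := ((Real.hasDerivAt_cos s).sub_const 1).add ((hasDerivAt_pow 2 s).div_const 2)
    have h2 := h1.sub ((hasDerivAt_pow 4 s).div_const 24)
    have := h2.add ((hasDerivAt_pow 6 s).div_const 720)
    exact this.congr_deriv (by simp; ring)
  rw [hder.deriv]
  exact aux_f5 s hs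

lemma cos_taylor_bound (t : ℝ) :
    |Real.cos t - (1 - t ^ 2 / 2 + t ^ 4 / 24)| ≤ t ^ 6 / 720 := by
  wlog ht : 0 ≤ t with H
  · have := H (-t) (by linarith)
    have h2 : (-t) ^ 2 = t ^ 2 := by ring
    have h4 : (-t) ^ 4 = t ^ 4 := by ring
    have h6 : (-t) ^ 6 = t ^ 6 := by ring
    rwa [Real.cos_neg, h2, h4, h6] at this
  rw [abs_le]
  constructor
  · have := aux_f6 t ht; linarith
  · have := aux_f4 t ht
    have h6 : 0 ≤ t ^ 6 / 720 := by positivity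
    linarith

/-! ### Hermite values -/

lemma He_deriv_step (p : ℝ → ℝ) (p' : ℝ) (y : ℝ) (hp : HasDerivAt p p' y) :
    HasDerivAt (fun x => p x * Real.exp (-(x ^ 2) / 2))
      ((p' - y * p y) * Real.exp (-(y ^ 2) / 2)) y := by
  have hexp : HasDerivAt (fun x : ℝ => Real.exp (-(x ^ 2) / 2))
      (-y * Real.exp (-(y ^ 2) / 2)) y := by
    have h1 : HasDerivAt (fun x : ℝ => -(x ^ 2) / 2) (-y) y := by
      have := ((hasDerivAt_pow 2 y).neg).div_const 2
      exact this.congr_deriv (by simp; ring)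
    have := h1.exp
    convert this using 1; ring
  have := hp.mul hexp
  exact this.congr_deriv (by ring)

lemma deriv_mul_gauss (p dp : ℝ → ℝ) (h : ∀ y, HasDerivAt p (dp y) y) :
    deriv (fun x => p x * Real.exp (-(x ^ 2) / 2)) =
      fun y => (dp y - y * p y) * Real.exp (-(y ^ 2) / 2) :=
  funext fun y => (He_deriv_step p (dp y) y (h y)).deriv

lemma iter_g1 : iteratedDeriv 1 (fun y : ℝ => Real.exp (-(y ^ 2) / 2)) =
    fun y => -y * Real.exp (-(y ^ 2) / 2) := by
  rw [iteratedDeriv_one]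
  have h : deriv (fun x : ℝ => (1 : ℝ) * Real.exp (-(x ^ 2) / 2)) =
      fun y => ((0 : ℝ) - y * 1) * Real.exp (-(y ^ 2) / 2) :=
    deriv_mul_gauss _ _ (fun y => hasDerivAt_const y 1)
  simp only [one_mul] at h
  rw [h]; funext y; ring

lemma iter_g2 : iteratedDeriv 2 (fun y : ℝ => Real.exp (-(y ^ 2) / 2)) =
    fun y => (y ^ 2 - 1) * Real.exp (-(y ^ 2) / 2) := by
  have hsucc : iteratedDeriv 2 (fun y : ℝ => Real.exp (-(y ^ 2) / 2)) =
      deriv (iteratedDeriv 1 (fun y : ℝ => Real.exp (-(y ^ 2) / 2))) := iteratedDeriv_succ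
  rw [hsucc, iter_g1]
  have h : deriv (fun x : ℝ => (-x) * Real.exp (-(x ^ 2) / 2)) =
      fun y => ((-1 : ℝ) - y * (-y)) * Real.exp (-(y ^ 2) / 2) :=
    deriv_mul_gauss _ _ (fun y => (hasDerivAt_id y).neg)
  rw [show (fun y : ℝ => -y * Real.exp (-(y ^ 2) / 2)) =
      (fun x : ℝ => (-x) * Real.exp (-(x ^ 2) / 2)) from rfl, h]
  funext y; ring

lemma iter_g3 : iteratedDeriv 3 (fun y : ℝ => Real.exp (-(y ^ 2) / 2)) =
    fun y => (3 * y - y ^ 3) * Real.exp (-(y ^ 2) / 2) := by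
  have hsucc : iteratedDeriv 3 (fun y : ℝ => Real.exp (-(y ^ 2) / 2)) =
      deriv (iteratedDeriv 2 (fun y : ℝ => Real.exp (-(y ^ 2) / 2))) := iteratedDeriv_succ
  rw [hsucc, iter_g2]
  have h : deriv (fun x : ℝ => (x ^ 2 - 1) * Real.exp (-(x ^ 2) / 2)) =
      fun y => ((2 * y) - y * (y ^ 2 - 1)) * Real.exp (-(y ^ 2) / 2) := by
    apply deriv_mul_gauss
    intro y
    have := (hasDerivAt_pow 2 y).sub_const 1
    exact this.congr_deriv (by push_cast; ring)
  rw [h]; funext y; ring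

lemma iter_g4 : iteratedDeriv 4 (fun y : ℝ => Real.exp (-(y ^ 2) / 2)) =
    fun y => (y ^ 4 - 6 * y ^ 2 + 3) * Real.exp (-(y ^ 2) / 2) := by
  have hsucc : iteratedDeriv 4 (fun y : ℝ => Real.exp (-(y ^ 2) / 2)) =
      deriv (iteratedDeriv 3 (fun y : ℝ => Real.exp (-(y ^ 2) / 2))) := iteratedDeriv_succ
  rw [hsucc, iter_g3]
  have h : deriv (fun x : ℝ => (3 * x - x ^ 3) * Real.exp (-(x ^ 2) / 2)) =
      fun y => ((3 - 3 * y ^ 2) - y * (3 * y - y ^ 3)) * Real.exp (-(y ^ 2) / 2) := by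
    apply deriv_mul_gauss
    intro y
    have := ((hasDerivAt_id y).const_mul 3).sub (hasDerivAt_pow 3 y)
    exact this.congr_deriv (by push_cast; ring)
  rw [h]; funext y; ring

lemma iter_g5 : iteratedDeriv 5 (fun y : ℝ => Real.exp (-(y ^ 2) / 2)) =
    fun y => (-(y ^ 5) + 10 * y ^ 3 - 15 * y) * Real.exp (-(y ^ 2) / 2) := by
  have hsucc : iteratedDeriv 5 (fun y : ℝ => Real.exp (-(y ^ 2) / 2)) =
      deriv (iteratedDeriv 4 (fun y : ℝ => Real.exp (-(y ^ 2) / 2))) := iteratedDeriv_succ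
  rw [hsucc, iter_g4]
  have h : deriv (fun x : ℝ => (x ^ 4 - 6 * x ^ 2 + 3) * Real.exp (-(x ^ 2) / 2)) =
      fun y => ((4 * y ^ 3 - 12 * y) - y * (y ^ 4 - 6 * y ^ 2 + 3)) *
        Real.exp (-(y ^ 2) / 2) := by
    apply deriv_mul_gauss
    intro y
    have := ((hasDerivAt_pow 4 y).sub ((hasDerivAt_pow 2 y).const_mul 6)).add_const 3
    exact this.congr_deriv (by push_cast; ring)
  rw [h]; funext y; ring

lemma exp_cancel (ω : ℝ) : Real.exp (ω ^ 2 / 2) * Real.exp (-(ω ^ 2) / 2) = 1 := by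
  rw [← Real.exp_add]; ring_nf; exact Real.exp_zero

lemma He_one (ω : ℝ) : He 1 ω = ω := by
  unfold He
  rw [iter_g1]
  linear_combination ω * exp_cancel ω

lemma He_three (ω : ℝ) : He 3 ω = ω ^ 3 - 3 * ω := by
  unfold He
  rw [iter_g3]
  linear_combination (ω ^ 3 - 3 * ω) * exp_cancel ω

lemma He_five (ω : ℝ) : He 5 ω = ω ^ 5 - 10 * ω ^ 3 + 15 * ω := by
  unfold He
  rw [iter_g5]
  linear_combination (ω ^ 5 - 10 * ω ^ 3 + 15 * ω) * exp_cancel ω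

/-! ### J0 estimate -/

lemma sin_sq_int : ∫ φ in (0:ℝ)..Real.pi, Real.sin φ ^ 2 = Real.pi / 2 := by
  rw [integral_sin_sq]
  simp

lemma sin_pow4_int : ∫ φ in (0:ℝ)..Real.pi, Real.sin φ ^ 4 = 3 * Real.pi / 8 := by
  have := integral_sin_pow_even (n := 2)
  norm_num [Finset.prod_range_succ, Finset.prod_range_one] at this
  rw [this]; ring

lemma J0_bound (x : ℝ) : |J0 x - (1 - x ^ 2 / 4 + x ^ 4 / 64)| ≤ x ^ 6 / 720 := by
  have hπ : 0 < Real.pi := Real.pi_pos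
  -- integral of the Taylor polynomial
  have hsplit : ∫ φ in (0:ℝ)..Real.pi,
      (1 - x ^ 2 / 2 * Real.sin φ ^ 2 + x ^ 4 / 24 * Real.sin φ ^ 4) =
      Real.pi * (1 - x ^ 2 / 4 + x ^ 4 / 64) := by
    rw [intervalIntegral.integral_add, intervalIntegral.integral_sub,
      intervalIntegral.integral_const, intervalIntegral.integral_const_mul,
      intervalIntegral.integral_const_mul, sin_sq_int, sin_pow4_int]
    · simp only [smul_eq_mul]; ring
    all_goals apply Continuous.intervalIntegrable; fun_prop
  -- pointwise bound and integral comparison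
  have hdiff : |(∫ φ in (0:ℝ)..Real.pi, Real.cos (x * Real.sin φ)) -
      ∫ φ in (0:ℝ)..Real.pi,
        (1 - x ^ 2 / 2 * Real.sin φ ^ 2 + x ^ 4 / 24 * Real.sin φ ^ 4)| ≤
      x ^ 6 / 720 * |Real.pi - 0| := by
    rw [← intervalIntegral.integral_sub]
    · rw [← Real.norm_eq_abs]
      apply intervalIntegral.norm_integral_le_of_norm_le_const
      intro φ _
      rw [Real.norm_eq_abs]
      have h1 := cos_taylor_bound (x * Real.sin φ)
      have h2 : (x * Real.sin φ) ^ 6 ≤ x ^ 6 := by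
        rw [mul_pow]
        have hs : Real.sin φ ^ 6 ≤ 1 := by
          rw [show (6:ℕ) = 2 * 3 from rfl, pow_mul]
          exact pow_le_one₀ (sq_nonneg _) (Real.sin_sq_le_one φ)
        nlinarith [pow_nonneg (sq_nonneg x) 3, sq_nonneg (x ^ 3)]
      have h3 : 1 - x ^ 2 / 2 * Real.sin φ ^ 2 + x ^ 4 / 24 * Real.sin φ ^ 4 =
          1 - (x * Real.sin φ) ^ 2 / 2 + (x * Real.sin φ) ^ 4 / 24 := by ring
      rw [h3]
      calc |Real.cos (x * Real.sin φ) -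
            (1 - (x * Real.sin φ) ^ 2 / 2 + (x * Real.sin φ) ^ 4 / 24)|
          ≤ (x * Real.sin φ) ^ 6 / 720 := h1
        _ ≤ x ^ 6 / 720 := by linarith
    all_goals apply Continuous.intervalIntegrable; fun_prop
  rw [hsplit] at hdiff
  have hJ : J0 x - (1 - x ^ 2 / 4 + x ^ 4 / 64) = (1 / Real.pi) *
      ((∫ φ in (0:ℝ)..Real.pi, Real.cos (x * Real.sin φ)) -
        Real.pi * (1 - x ^ 2 / 4 + x ^ 4 / 64)) := by
    unfold J0
    field_simp
  rw [hJ, abs_mul, abs_of_nonneg (by positivity : (0:ℝ) ≤ 1 / Real.pi)]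
  rw [sub_zero, abs_of_nonneg hπ.le] at hdiff
  calc 1 / Real.pi * |(∫ φ in (0:ℝ)..Real.pi, Real.cos (x * Real.sin φ)) -
        Real.pi * (1 - x ^ 2 / 4 + x ^ 4 / 64)|
      ≤ 1 / Real.pi * (x ^ 6 / 720 * Real.pi) := by
        apply mul_le_mul_of_nonneg_left hdiff (by positivity)
    _ = x ^ 6 / 720 := by field_simp

theorem stmt_5 (r ω : ℝ) (hr : 0 ≤ r) (hω : 0 ≤ ω) :
    |ω * J0 (r * ω) -
        ((15 / 64 * r ^ 4 - 3 / 4 * r ^ 2 + 1) * He 1 ω +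
          (5 / 32 * r ^ 4 - 1 / 4 * r ^ 2) * He 3 ω +
          1 / 64 * r ^ 4 * He 5 ω)| ≤ ω ^ 7 * r ^ 6 / 720 := by
  rw [He_one, He_three, He_five]
  have key := J0_bound (r * ω)
  have h1 : (15 / 64 * r ^ 4 - 3 / 4 * r ^ 2 + 1) * ω +
      (5 / 32 * r ^ 4 - 1 / 4 * r ^ 2) * (ω ^ 3 - 3 * ω) +
      1 / 64 * r ^ 4 * (ω ^ 5 - 10 * ω ^ 3 + 15 * ω)
      = ω * (1 - (r * ω) ^ 2 / 4 + (r * ω) ^ 4 / 64) := by ring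
  rw [h1, ← mul_sub, abs_mul, abs_of_nonneg hω]
  calc ω * |J0 (r * ω) - (1 - (r * ω) ^ 2 / 4 + (r * ω) ^ 4 / 64)|
      ≤ ω * ((r * ω) ^ 6 / 720) := by exact mul_le_mul_of_nonneg_left key hω
    _ = ω ^ 7 * r ^ 6 / 720 := by ring
end

section
/- For all real t and x with t > x > 0, the improper integral ∫₀^∞ sin(ωt) J₀(ωx) dω converges and equals 1/√(t² − x²); that is, lim_{A→∞} ∫₀^A sin(ωt) J₀(ωx) dω = 1/√(t² − x²). -/
open MeasureTheory

section Aux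
open intervalIntegral Real Filter

lemma inner_int (t a A : ℝ) (h : |a| < t) :
    ∫ ω in (0:ℝ)..A, Real.sin (ω * t) * Real.cos (ω * a) =
      t / (t ^ 2 - a ^ 2) - (1/2) * (Real.cos (A * (t + a)) / (t + a))
        - (1/2) * (Real.cos (A * (t - a)) / (t - a)) := by
  have ha := abs_lt.mp h
  have hpa : 0 < t + a := by linarith
  have hma : 0 < t - a := by linarith
  have key : ∀ r : ℝ, r ≠ 0 → ∫ ω in (0:ℝ)..A, Real.sin (ω * r) = (1 - Real.cos (A * r)) / r := by
    intro r hr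
    rw [intervalIntegral.integral_comp_mul_right Real.sin hr, integral_sin]
    simp [smul_eq_mul]
    ring
  have h1 : ∀ ω : ℝ, Real.sin (ω * t) * Real.cos (ω * a)
      = Real.sin (ω * (t + a)) / 2 + Real.sin (ω * (t - a)) / 2 := by
    intro ω
    simp [mul_add, mul_sub, Real.sin_add, Real.sin_sub]
    ring
  simp_rw [h1]
  rw [intervalIntegral.integral_add ((Continuous.intervalIntegrable (by continuity) _ _))
      ((Continuous.intervalIntegrable (by continuity) _ _))]
  simp_rw [intervalIntegral.integral_div]
  rw [key _ hpa.ne', key _ hma.ne']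
  have hsq : t ^ 2 - a ^ 2 > 0 := by nlinarith
  field_simp
  ring

lemma pos_aux {k u v : ℝ} (hk : 0 < k) (huv : u ^ 2 + v ^ 2 = 1) : 0 < v ^ 2 + k * u ^ 2 := by
  rcases le_or_gt k 1 with h | h
  · nlinarith [mul_nonneg (sub_nonneg.mpr h) (sq_nonneg v)]
  · nlinarith [mul_nonneg (sub_nonneg.mpr h.le) (sq_nonneg u)]

lemma H_deriv (k : ℝ) (hk : 0 < k) (φ : ℝ) :
    HasDerivAt (fun φ : ℝ => φ + Real.arctan
        ((k - 1) * Real.sin φ * Real.cos φ / (Real.cos φ ^ 2 + k * Real.sin φ ^ 2)))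
      (k / (Real.cos φ ^ 2 + k ^ 2 * Real.sin φ ^ 2)) φ := by
  have hsc := Real.sin_sq_add_cos_sq φ
  set s := Real.sin φ
  set co := Real.cos φ
  have hD : co ^ 2 + k * s ^ 2 > 0 := pos_aux hk hsc
  have hD2 : co ^ 2 + k ^ 2 * s ^ 2 > 0 := pos_aux (by positivity) hsc
  have hN : HasDerivAt (fun φ : ℝ => (k - 1) * Real.sin φ * Real.cos φ)
      ((k - 1) * (co ^ 2 - s ^ 2)) φ := by
    have := ((Real.hasDerivAt_sin φ).const_mul (k - 1)).mul (Real.hasDerivAt_cos φ)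
    refine HasDerivAt.congr_deriv this ?_
    simp only [s, co]; ring
  have hDd : HasDerivAt (fun φ : ℝ => Real.cos φ ^ 2 + k * Real.sin φ ^ 2)
      (2 * (k - 1) * s * co) φ := by
    have h1 := ((Real.hasDerivAt_cos φ).pow 2)
    have h2 := ((Real.hasDerivAt_sin φ).pow 2).const_mul k
    refine HasDerivAt.congr_deriv (h1.add h2) ?_
    simp only [s, co, Nat.cast_ofNat, pow_one]; ring
  have hq : HasDerivAt (fun φ : ℝ => (k - 1) * Real.sin φ * Real.cos φ /
      (Real.cos φ ^ 2 + k * Real.sin φ ^ 2))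
      (((k - 1) * (co ^ 2 - s ^ 2) * (co ^ 2 + k * s ^ 2)
        - (k - 1) * s * co * (2 * (k - 1) * s * co)) / (co ^ 2 + k * s ^ 2) ^ 2) φ :=
    hN.div hDd hD.ne'
  have harc := (Real.hasDerivAt_arctan _).comp φ hq
  have hsum := (hasDerivAt_id φ).add harc
  refine HasDerivAt.congr_deriv hsum ?_
  have hDN : (co ^ 2 + k * s ^ 2) ^ 2 + ((k - 1) * s * co) ^ 2 = co ^ 2 + k ^ 2 * s ^ 2 := by
    nlinarith [hsc]
  have hkey : (k - 1) * (co ^ 2 - s ^ 2) * (co ^ 2 + k * s ^ 2)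
      - (k - 1) * s * co * (2 * (k - 1) * s * co) = k - (co ^ 2 + k ^ 2 * s ^ 2) := by
    linear_combination ((k - 1) * co ^ 2 + (k - 1) * (1 - s ^ 2) - (k - 1) ^ 2 * s ^ 2 + 1) * hsc
  have h1g : 1 + ((k - 1) * s * co / (co ^ 2 + k * s ^ 2)) ^ 2
      = (co ^ 2 + k ^ 2 * s ^ 2) / (co ^ 2 + k * s ^ 2) ^ 2 := by
    rw [← hDN]; field_simp
  rw [hkey, h1g]
  field_simp
  ring

lemma phi_int (t x : ℝ) (hx : 0 < x) (hxt : x < t) :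
    ∫ φ in (0:ℝ)..Real.pi, t / (t ^ 2 - (x * Real.sin φ) ^ 2)
      = Real.pi / Real.sqrt (t ^ 2 - x ^ 2) := by
  have ht : 0 < t := hx.trans hxt
  have hc2 : (0:ℝ) < t ^ 2 - x ^ 2 := by nlinarith
  set c := Real.sqrt (t ^ 2 - x ^ 2) with hc
  have hcpos : 0 < c := Real.sqrt_pos.mpr hc2
  have hcsq : c ^ 2 = t ^ 2 - x ^ 2 := Real.sq_sqrt hc2.le
  set k := c / t with hk
  have hkpos : 0 < k := div_pos hcpos ht
  have heq : ∀ φ : ℝ, t / (t ^ 2 - (x * Real.sin φ) ^ 2)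
      = (1 / c) * (k / (Real.cos φ ^ 2 + k ^ 2 * Real.sin φ ^ 2)) := by
    intro φ
    have hsc := Real.sin_sq_add_cos_sq φ
    have hD2 : Real.cos φ ^ 2 + k ^ 2 * Real.sin φ ^ 2 > 0 := pos_aux (by positivity) hsc
    have hden : t ^ 2 - (x * Real.sin φ) ^ 2 > 0 := by
      nlinarith [Real.sin_sq_le_one φ, sq_nonneg (Real.sin φ)]
    have h1 : (Real.cos φ ^ 2 + k ^ 2 * Real.sin φ ^ 2) ≠ 0 := hD2.ne'
    have hden2 : t ^ 2 * Real.cos φ ^ 2 + c ^ 2 * Real.sin φ ^ 2 = t ^ 2 - (x * Real.sin φ) ^ 2 := by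
      linear_combination Real.sin φ ^ 2 * hcsq + t ^ 2 * hsc
    have hne3 : t ^ 2 * Real.cos φ ^ 2 + c ^ 2 * Real.sin φ ^ 2 ≠ 0 := by
      rw [hden2]; exact hden.ne'
    rw [hk] at h1 ⊢
    rw [← hden2]
    have hne4 : t * c ^ 2 * Real.sin φ ^ 2 + t ^ 3 * Real.cos φ ^ 2 ≠ 0 := by
      rw [show t * c ^ 2 * Real.sin φ ^ 2 + t ^ 3 * Real.cos φ ^ 2
        = t * (t ^ 2 * Real.cos φ ^ 2 + c ^ 2 * Real.sin φ ^ 2) by ring]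
      exact mul_ne_zero ht.ne' hne3
    field_simp
  simp_rw [heq]
  rw [intervalIntegral.integral_const_mul]
  have hcont : Continuous fun φ : ℝ => k / (Real.cos φ ^ 2 + k ^ 2 * Real.sin φ ^ 2) := by
    apply continuous_const.div (by continuity)
    intro φ
    exact (pos_aux (k := k ^ 2) (by positivity) (Real.sin_sq_add_cos_sq φ)).ne'
  rw [intervalIntegral.integral_eq_sub_of_hasDerivAt
      (fun φ _ => H_deriv k hkpos φ) (hcont.intervalIntegrable _ _)]
  simp [Real.sin_pi, Real.cos_pi]
  field_simp

lemma osc_side (t b A m p q : ℝ) (hb : b ≠ 0) (htb : |b| < t) (hA : 0 < A)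
    (hm : 0 < m) (hpq : p ≤ q) (hqp : q - p ≤ Real.pi)
    (hcos : ∀ φ ∈ Set.Icc p q, m ≤ |Real.cos φ|) :
    |∫ φ in p..q, Real.cos (A * (t + b * Real.sin φ)) / (t + b * Real.sin φ)| ≤
      (2 / (m * (t - |b|)) + Real.pi * (t + 2 * |b|) / (m ^ 2 * (t - |b|) ^ 2)) / (A * |b|) := by
  have hbt : 0 < t - |b| := by linarith
  have ht : 0 < t := (abs_nonneg b).trans_lt htb
  have habs : 0 < |b| := abs_pos.mpr hb
  have hAb : 0 < A * |b| := mul_pos hA habs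
  -- ψ bounds
  have hψlb : ∀ φ : ℝ, t - |b| ≤ t + b * Real.sin φ := by
    intro φ
    have h1 : |b * Real.sin φ| ≤ |b| := by
      rw [abs_mul]
      nlinarith [Real.abs_sin_le_one φ, abs_nonneg b]
    have := (abs_le.mp h1).1
    linarith
  have hψub : ∀ φ : ℝ, t + b * Real.sin φ ≤ t + |b| := by
    intro φ
    have h1 : |b * Real.sin φ| ≤ |b| := by
      rw [abs_mul]
      nlinarith [Real.abs_sin_le_one φ, abs_nonneg b]
    have := (abs_le.mp h1).2
    linarith
  have hψpos : ∀ φ : ℝ, 0 < t + b * Real.sin φ := fun φ => hbt.trans_le (hψlb φ)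
  -- the parts
  set u : ℝ → ℝ := fun φ => Real.sin (A * (t + b * Real.sin φ)) / (A * b) with hu_def
  set u' : ℝ → ℝ := fun φ => Real.cos φ * Real.cos (A * (t + b * Real.sin φ)) with hu'_def
  set v : ℝ → ℝ := fun φ => (Real.cos φ * (t + b * Real.sin φ))⁻¹ with hv_def
  set v' : ℝ → ℝ := fun φ => (Real.sin φ * (t + b * Real.sin φ) - b * Real.cos φ ^ 2) /
      (Real.cos φ * (t + b * Real.sin φ)) ^ 2 with hv'_def
  have hcosne : ∀ φ ∈ Set.Icc p q, Real.cos φ ≠ 0 := by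
    intro φ hφ
    have := hcos φ hφ
    intro h0
    rw [h0, abs_zero] at this
    linarith
  have huIcc : Set.uIcc p q = Set.Icc p q := Set.uIcc_of_le hpq
  have hderivu : ∀ φ ∈ Set.uIcc p q, HasDerivAt u (u' φ) φ := by
    intro φ _
    have h1 : HasDerivAt (fun φ : ℝ => A * (t + b * Real.sin φ)) (A * (b * Real.cos φ)) φ :=
      (((Real.hasDerivAt_sin φ).const_mul b).const_add t).const_mul A
    have h2 := (Real.hasDerivAt_sin _).comp φ h1
    have h3 := h2.div_const (A * b)
    refine HasDerivAt.congr_deriv h3 ?_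
    field_simp [hu'_def]
    ring
  have hderivv : ∀ φ ∈ Set.uIcc p q, HasDerivAt v (v' φ) φ := by
    intro φ hφ
    rw [huIcc] at hφ
    have h1 : HasDerivAt (fun φ : ℝ => Real.cos φ * (t + b * Real.sin φ))
        (-Real.sin φ * (t + b * Real.sin φ) + Real.cos φ * (b * Real.cos φ)) φ :=
      (Real.hasDerivAt_cos φ).mul (((Real.hasDerivAt_sin φ).const_mul b).const_add t)
    have hne : Real.cos φ * (t + b * Real.sin φ) ≠ 0 :=
      mul_ne_zero (hcosne φ hφ) (hψpos φ).ne'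
    have h2 := h1.inv hne
    refine HasDerivAt.congr_deriv h2 ?_
    rw [hv'_def]
    field_simp
    ring
  have hcontu' : Continuous u' := by
    apply Continuous.mul Real.continuous_cos
    exact Real.continuous_cos.comp (continuous_const.mul
      (continuous_const.add (continuous_const.mul Real.continuous_sin)))
  have hintv' : IntervalIntegrable v' volume p q := by
    apply ContinuousOn.intervalIntegrable
    rw [huIcc]
    apply ContinuousOn.div
    · fun_prop
    · fun_prop
    · intro φ hφ
      exact pow_ne_zero 2 (mul_ne_zero (hcosne φ hφ) (hψpos φ).ne')
  have hintu' : IntervalIntegrable u' volume p q := hcontu'.intervalIntegrable _ _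
  -- rewrite integrand as u' * v
  have hcongr : ∫ φ in p..q, Real.cos (A * (t + b * Real.sin φ)) / (t + b * Real.sin φ)
      = ∫ φ in p..q, u' φ * v φ := by
    apply intervalIntegral.integral_congr
    intro φ hφ
    rw [huIcc] at hφ
    show Real.cos (A * (t + b * Real.sin φ)) / (t + b * Real.sin φ)
      = Real.cos φ * Real.cos (A * (t + b * Real.sin φ)) * (Real.cos φ * (t + b * Real.sin φ))⁻¹
    rw [← div_eq_mul_inv, mul_div_mul_left _ _ (hcosne φ hφ)]
  have hibp := intervalIntegral.integral_mul_deriv_eq_deriv_mul hderivu hderivv hintu' hintv'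
  -- hibp : ∫ u * v' = u q * v q - u p * v p - ∫ u' * v
  have hmain : ∫ φ in p..q, u' φ * v φ
      = u q * v q - u p * v p - ∫ φ in p..q, u φ * v' φ := by
    rw [hibp]; ring
  rw [hcongr, hmain]
  -- bounds
  have hub : ∀ φ : ℝ, |u φ| ≤ 1 / (A * |b|) := by
    intro φ
    rw [hu_def]
    simp only []
    rw [abs_div, abs_mul, abs_of_pos hA]
    gcongr
    exact Real.abs_sin_le_one _
  have hvlow : ∀ φ ∈ Set.Icc p q, m * (t - |b|) ≤ |Real.cos φ * (t + b * Real.sin φ)| := by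
    intro φ hφ
    rw [abs_mul, abs_of_pos (hψpos φ)]
    exact mul_le_mul (hcos φ hφ) (hψlb φ) hbt.le (abs_nonneg _)
  have hvb : ∀ φ ∈ Set.Icc p q, |v φ| ≤ 1 / (m * (t - |b|)) := by
    intro φ hφ
    rw [hv_def]
    simp only []
    rw [abs_inv, one_div]
    exact inv_anti₀ (by positivity) (hvlow φ hφ)
  have hCv' : (0:ℝ) ≤ (t + 2 * |b|) / (m ^ 2 * (t - |b|) ^ 2) := by positivity
  have hv'b : ∀ φ ∈ Set.Icc p q, |v' φ| ≤ (t + 2 * |b|) / (m ^ 2 * (t - |b|) ^ 2) := by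
    intro φ hφ
    rw [hv'_def]
    simp only []
    rw [abs_div]
    apply div_le_div₀ (by positivity) ?_ (by positivity) ?_
    · have h1 : |Real.sin φ * (t + b * Real.sin φ) - b * Real.cos φ ^ 2|
          ≤ |Real.sin φ * (t + b * Real.sin φ)| + |b * Real.cos φ ^ 2| := abs_sub _ _
      have h2 : |Real.sin φ * (t + b * Real.sin φ)| ≤ t + |b| := by
        rw [abs_mul, abs_of_pos (hψpos φ)]
        calc |Real.sin φ| * (t + b * Real.sin φ) ≤ 1 * (t + |b|) :=
          mul_le_mul (Real.abs_sin_le_one φ) (hψub φ) (hψpos φ).le zero_le_one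
        _ = t + |b| := one_mul _
      have h3 : |b * Real.cos φ ^ 2| ≤ |b| := by
        rw [abs_mul]
        calc |b| * |Real.cos φ ^ 2| ≤ |b| * 1 := by
              apply mul_le_mul_of_nonneg_left ?_ (abs_nonneg b)
              rw [abs_of_nonneg (sq_nonneg _)]
              exact Real.cos_sq_le_one φ
        _ = |b| := mul_one _
      linarith
    · calc m ^ 2 * (t - |b|) ^ 2 = (m * (t - |b|)) ^ 2 := by ring
        _ ≤ |Real.cos φ * (t + b * Real.sin φ)| ^ 2 :=
            pow_le_pow_left₀ (by positivity) (hvlow φ hφ) 2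
        _ = (Real.cos φ * (t + b * Real.sin φ)) ^ 2 := sq_abs _
        _ = |(Real.cos φ * (t + b * Real.sin φ)) ^ 2| := (abs_of_nonneg (sq_nonneg _)).symm
  -- bound the integral term
  have hIb : |∫ φ in p..q, u φ * v' φ|
      ≤ 1 / (A * |b|) * ((t + 2 * |b|) / (m ^ 2 * (t - |b|) ^ 2)) * Real.pi := by
    have h1 : |∫ φ in p..q, u φ * v' φ|
        ≤ 1 / (A * |b|) * ((t + 2 * |b|) / (m ^ 2 * (t - |b|) ^ 2)) * |q - p| := by
      rw [← Real.norm_eq_abs]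
      apply intervalIntegral.norm_integral_le_of_norm_le_const
      intro φ hφ
      rw [Set.uIoc_of_le hpq] at hφ
      have hφ' : φ ∈ Set.Icc p q := Set.Ioc_subset_Icc_self hφ
      rw [Real.norm_eq_abs, abs_mul]
      exact mul_le_mul (hub φ) (hv'b φ hφ') (abs_nonneg _) (by positivity)
    apply h1.trans
    apply mul_le_mul_of_nonneg_left ?_ (by positivity)
    rw [abs_of_nonneg (by linarith : (0:ℝ) ≤ q - p)]
    linarith
  -- assemble
  have htri : |u q * v q - u p * v p - ∫ φ in p..q, u φ * v' φ|
      ≤ |u q * v q| + |u p * v p| + |∫ φ in p..q, u φ * v' φ| := by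
    calc |u q * v q - u p * v p - ∫ φ in p..q, u φ * v' φ|
        ≤ |u q * v q - u p * v p| + |∫ φ in p..q, u φ * v' φ| := abs_sub _ _
      _ ≤ |u q * v q| + |u p * v p| + |∫ φ in p..q, u φ * v' φ| := by
          have := abs_sub (u q * v q) (u p * v p)
          linarith
  have hq' : q ∈ Set.Icc p q := ⟨hpq, le_refl q⟩
  have hp' : p ∈ Set.Icc p q := ⟨le_refl p, hpq⟩
  have hterm : ∀ φ ∈ Set.Icc p q, |u φ * v φ| ≤ 1 / (A * |b|) * (1 / (m * (t - |b|))) := by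
    intro φ hφ
    rw [abs_mul]
    exact mul_le_mul (hub φ) (hvb φ hφ) (abs_nonneg _) (by positivity)
  calc |u q * v q - u p * v p - ∫ φ in p..q, u φ * v' φ|
      ≤ |u q * v q| + |u p * v p| + |∫ φ in p..q, u φ * v' φ| := htri
    _ ≤ 1 / (A * |b|) * (1 / (m * (t - |b|))) + 1 / (A * |b|) * (1 / (m * (t - |b|)))
        + 1 / (A * |b|) * ((t + 2 * |b|) / (m ^ 2 * (t - |b|) ^ 2)) * Real.pi := by
        have h1 := hterm q hq'
        have h2 := hterm p hp'
        linarith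
    _ = (2 / (m * (t - |b|)) + Real.pi * (t + 2 * |b|) / (m ^ 2 * (t - |b|) ^ 2)) / (A * |b|) := by
        field_simp
        ring

lemma osc_tendsto (t b : ℝ) (hb : b ≠ 0) (htb : |b| < t) :
    Tendsto (fun A : ℝ => ∫ φ in (0:ℝ)..Real.pi,
        Real.cos (A * (t + b * Real.sin φ)) / (t + b * Real.sin φ)) atTop (nhds 0) := by
  have hbt : 0 < t - |b| := by linarith
  have habs : 0 < |b| := abs_pos.mpr hb
  have hψlb : ∀ φ : ℝ, t - |b| ≤ t + b * Real.sin φ := by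
    intro φ
    have h1 : |b * Real.sin φ| ≤ |b| := by
      rw [abs_mul]
      nlinarith [Real.abs_sin_le_one φ, abs_nonneg b]
    have := (abs_le.mp h1).1
    linarith
  have hψpos : ∀ φ : ℝ, 0 < t + b * Real.sin φ := fun φ => hbt.trans_le (hψlb φ)
  have hcont : ∀ A : ℝ, Continuous fun φ : ℝ =>
      Real.cos (A * (t + b * Real.sin φ)) / (t + b * Real.sin φ) := by
    intro A
    apply Continuous.div (by fun_prop) (by fun_prop)
    exact fun φ => (hψpos φ).ne'
  rw [Metric.tendsto_atTop]
  intro ε hε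
  -- choose δ
  set δ : ℝ := min (Real.pi / 4) (ε * (t - |b|) / 8) with hδdef
  have hδpos : 0 < δ := lt_min (by positivity) (by positivity)
  have hδlt : δ < Real.pi / 2 := (min_le_left _ _).trans_lt (by linarith [Real.pi_pos])
  have hδε : 2 * δ * (1 / (t - |b|)) ≤ ε / 4 := by
    have h1 : δ ≤ ε * (t - |b|) / 8 := min_le_right _ _
    rw [mul_one_div, div_le_div_iff₀ (by linarith) (by norm_num)]
    nlinarith
  set m : ℝ := Real.sin δ with hmdef
  have hmpos : 0 < m := Real.sin_pos_of_pos_of_lt_pi hδpos (by linarith [Real.pi_pos])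
  set K : ℝ := (2 / (m * (t - |b|)) + Real.pi * (t + 2 * |b|) / (m ^ 2 * (t - |b|) ^ 2)) / |b|
    with hKdef
  have ht0 : (0:ℝ) < t := (abs_nonneg b).trans_lt htb
  have hKpos : 0 < K := by
    apply div_pos ?_ habs
    have h2 : 0 < 2 / (m * (t - |b|)) := by positivity
    have h3 : 0 ≤ Real.pi * (t + 2 * |b|) / (m ^ 2 * (t - |b|) ^ 2) :=
      div_nonneg (mul_nonneg Real.pi_pos.le (by linarith [abs_nonneg b])) (by positivity)
    linarith
  refine ⟨max 1 (8 * K / ε), fun A hA => ?_⟩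
  have hA1 : (1:ℝ) ≤ A := (le_max_left _ _).trans hA
  have hA0 : 0 < A := lt_of_lt_of_le one_pos hA1
  have hAK : 8 * K / ε ≤ A := (le_max_right _ _).trans hA
  have hKA : K / A ≤ ε / 4 := by
    rw [div_le_div_iff₀ hA0 (by norm_num)]
    rw [div_le_iff₀ hε] at hAK
    nlinarith
  rw [Real.dist_eq, sub_zero]
  -- split the integral
  have hi1 : IntervalIntegrable (fun φ => Real.cos (A * (t + b * Real.sin φ)) /
      (t + b * Real.sin φ)) volume 0 (Real.pi / 2 - δ) := (hcont A).intervalIntegrable _ _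
  have hi2 : IntervalIntegrable (fun φ => Real.cos (A * (t + b * Real.sin φ)) /
      (t + b * Real.sin φ)) volume (Real.pi / 2 - δ) (Real.pi / 2 + δ) :=
    (hcont A).intervalIntegrable _ _
  have hi3 : IntervalIntegrable (fun φ => Real.cos (A * (t + b * Real.sin φ)) /
      (t + b * Real.sin φ)) volume (Real.pi / 2 + δ) Real.pi := (hcont A).intervalIntegrable _ _
  have hsplit : ∫ φ in (0:ℝ)..Real.pi, Real.cos (A * (t + b * Real.sin φ)) / (t + b * Real.sin φ)
      = (∫ φ in (0:ℝ)..(Real.pi / 2 - δ), Real.cos (A * (t + b * Real.sin φ)) / (t + b * Real.sin φ))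
      + (∫ φ in (Real.pi / 2 - δ)..(Real.pi / 2 + δ), Real.cos (A * (t + b * Real.sin φ)) / (t + b * Real.sin φ))
      + (∫ φ in (Real.pi / 2 + δ)..Real.pi, Real.cos (A * (t + b * Real.sin φ)) / (t + b * Real.sin φ)) := by
    rw [← intervalIntegral.integral_add_adjacent_intervals (hi1.trans hi2) hi3,
      ← intervalIntegral.integral_add_adjacent_intervals hi1 hi2]
  rw [hsplit]
  -- bound each piece
  have hside1 : |∫ φ in (0:ℝ)..(Real.pi / 2 - δ),
      Real.cos (A * (t + b * Real.sin φ)) / (t + b * Real.sin φ)| ≤ K / A := by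
    have hpq : (0:ℝ) ≤ Real.pi / 2 - δ := by linarith
    have hqp : Real.pi / 2 - δ - 0 ≤ Real.pi := by linarith [Real.pi_pos]
    have hcosb : ∀ φ ∈ Set.Icc (0:ℝ) (Real.pi / 2 - δ), m ≤ |Real.cos φ| := by
      intro φ hφ
      have h1 : Real.cos (Real.pi / 2 - δ) ≤ Real.cos φ :=
        Real.cos_le_cos_of_nonneg_of_le_pi hφ.1 (by linarith [Real.pi_pos]) hφ.2
      rw [Real.cos_pi_div_two_sub] at h1
      rw [abs_of_pos (lt_of_lt_of_le hmpos h1)]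
      exact h1
    have := osc_side t b A m 0 (Real.pi / 2 - δ) hb htb hA0 hmpos hpq hqp hcosb
    exact this.trans (le_of_eq (by rw [hKdef, div_div, mul_comm |b| A]))
  have hside3 : |∫ φ in (Real.pi / 2 + δ)..Real.pi,
      Real.cos (A * (t + b * Real.sin φ)) / (t + b * Real.sin φ)| ≤ K / A := by
    have hpq : Real.pi / 2 + δ ≤ Real.pi := by linarith
    have hqp : Real.pi - (Real.pi / 2 + δ) ≤ Real.pi := by linarith [Real.pi_pos]
    have hcosb : ∀ φ ∈ Set.Icc (Real.pi / 2 + δ) Real.pi, m ≤ |Real.cos φ| := by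
      intro φ hφ
      have h1 : Real.cos φ ≤ Real.cos (Real.pi / 2 + δ) :=
        Real.cos_le_cos_of_nonneg_of_le_pi (by linarith [Real.pi_pos]) hφ.2 hφ.1
      rw [show Real.pi / 2 + δ = δ + Real.pi / 2 by ring, Real.cos_add_pi_div_two] at h1
      have h2 : m ≤ -Real.cos φ := by rw [hmdef]; linarith
      exact h2.trans (neg_le_abs _)
    have := osc_side t b A m (Real.pi / 2 + δ) Real.pi hb htb hA0 hmpos hpq hqp hcosb
    exact this.trans (le_of_eq (by rw [hKdef, div_div, mul_comm |b| A]))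
  have hmid : |∫ φ in (Real.pi / 2 - δ)..(Real.pi / 2 + δ),
      Real.cos (A * (t + b * Real.sin φ)) / (t + b * Real.sin φ)| ≤ ε / 4 := by
    have h1 : |∫ φ in (Real.pi / 2 - δ)..(Real.pi / 2 + δ),
        Real.cos (A * (t + b * Real.sin φ)) / (t + b * Real.sin φ)|
        ≤ 1 / (t - |b|) * |Real.pi / 2 + δ - (Real.pi / 2 - δ)| := by
      rw [← Real.norm_eq_abs]
      apply intervalIntegral.norm_integral_le_of_norm_le_const
      intro φ _
      rw [Real.norm_eq_abs, abs_div, abs_of_pos (hψpos φ)]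
      apply div_le_div₀ (by positivity) (Real.abs_cos_le_one _) hbt (hψlb φ)
    apply h1.trans
    rw [show Real.pi / 2 + δ - (Real.pi / 2 - δ) = 2 * δ by ring,
      abs_of_pos (by linarith : (0:ℝ) < 2 * δ)]
    calc 1 / (t - |b|) * (2 * δ) = 2 * δ * (1 / (t - |b|)) := by ring
      _ ≤ ε / 4 := hδε
  set I1 := ∫ φ in (0:ℝ)..(Real.pi / 2 - δ),
      Real.cos (A * (t + b * Real.sin φ)) / (t + b * Real.sin φ) with hI1
  set I2 := ∫ φ in (Real.pi / 2 - δ)..(Real.pi / 2 + δ),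
      Real.cos (A * (t + b * Real.sin φ)) / (t + b * Real.sin φ) with hI2
  set I3 := ∫ φ in (Real.pi / 2 + δ)..Real.pi,
      Real.cos (A * (t + b * Real.sin φ)) / (t + b * Real.sin φ) with hI3
  have h4 : |I1 + I2 + I3| ≤ |I1| + |I2| + |I3| := by
    have h5 := abs_add_le (I1 + I2) I3
    have h6 := abs_add_le I1 I2
    linarith
  have h7 : |I1| + |I2| + |I3| ≤ K / A + ε / 4 + K / A :=
    add_le_add (add_le_add hside1 hmid) hside3
  calc |I1 + I2 + I3| ≤ K / A + ε / 4 + K / A := h4.trans h7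
    _ < ε := by linarith [hKA]

lemma swap_gen {f : ℝ → ℝ → ℝ} (hf : Continuous (Function.uncurry f)) {A B : ℝ}
    (hA : 0 ≤ A) (hB : 0 ≤ B) :
    ∫ ω in (0:ℝ)..A, ∫ φ in (0:ℝ)..B, f ω φ = ∫ φ in (0:ℝ)..B, ∫ ω in (0:ℝ)..A, f ω φ := by
  rw [intervalIntegral.integral_of_le hA, intervalIntegral.integral_of_le hB]
  simp_rw [intervalIntegral.integral_of_le hB, intervalIntegral.integral_of_le hA]
  apply MeasureTheory.integral_integral_swap
  rw [Measure.prod_restrict]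
  apply MeasureTheory.IntegrableOn.mono_set
    (t := Set.Icc (0:ℝ) A ×ˢ Set.Icc (0:ℝ) B)
  · exact hf.continuousOn.integrableOn_compact (isCompact_Icc.prod isCompact_Icc)
  · exact Set.prod_mono Set.Ioc_subset_Icc_self Set.Ioc_subset_Icc_self


end Aux

section Main
open intervalIntegral Real Filter

theorem stmt_11 (t x : ℝ) (hx : 0 < x) (hxt : x < t) :
    Filter.Tendsto (fun A : ℝ => ∫ ω in (0 : ℝ)..A, Real.sin (ω * t) * J0 (ω * x))
      Filter.atTop (nhds (1 / Real.sqrt (t ^ 2 - x ^ 2))) := by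
  have ht : 0 < t := hx.trans hxt
  have hπ : 0 < Real.pi := Real.pi_pos
  have hc2 : (0:ℝ) < t ^ 2 - x ^ 2 := by nlinarith
  set c := Real.sqrt (t ^ 2 - x ^ 2) with hc
  have hcpos : 0 < c := Real.sqrt_pos.mpr hc2
  have hxabs : |x| < t := by rwa [abs_of_pos hx]
  have hnxabs : |(-x)| < t := by rwa [abs_neg, abs_of_pos hx]
  -- denominators never vanish
  have hsin_bd : ∀ b φ : ℝ, |b| < t → 0 < t + b * Real.sin φ := by
    intro b φ hb
    have h1 : |b * Real.sin φ| ≤ |b| := by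
      rw [abs_mul]
      nlinarith [Real.abs_sin_le_one φ, abs_nonneg b]
    have := (abs_le.mp h1).1
    linarith
  have hsq_bd : ∀ φ : ℝ, 0 < t ^ 2 - (x * Real.sin φ) ^ 2 := by
    intro φ
    have h1 := Real.sin_sq_le_one φ
    nlinarith [sq_nonneg (Real.sin φ)]
  set R1 : ℝ → ℝ := fun A => ∫ φ in (0:ℝ)..Real.pi,
      Real.cos (A * (t + x * Real.sin φ)) / (t + x * Real.sin φ) with hR1
  set R2 : ℝ → ℝ := fun A => ∫ φ in (0:ℝ)..Real.pi,
      Real.cos (A * (t + -x * Real.sin φ)) / (t + -x * Real.sin φ) with hR2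
  have hkey : ∀ A : ℝ, 0 ≤ A →
      (∫ ω in (0:ℝ)..A, Real.sin (ω * t) * J0 (ω * x))
      = (1 / Real.pi) * (Real.pi / c - (1/2) * R1 A - (1/2) * R2 A) := by
    intro A hA
    have h1 : ∀ ω : ℝ, Real.sin (ω * t) * J0 (ω * x)
        = (1 / Real.pi) * ∫ φ in (0:ℝ)..Real.pi,
            Real.sin (ω * t) * Real.cos (ω * (x * Real.sin φ)) := by
      intro ω
      rw [J0, ← mul_assoc, mul_comm (Real.sin (ω * t)) (1 / Real.pi), mul_assoc]
      congr 1
      rw [← intervalIntegral.integral_const_mul]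
      apply intervalIntegral.integral_congr
      intro φ _
      simp only [mul_assoc]
    simp_rw [h1]
    rw [intervalIntegral.integral_const_mul]
    congr 1
    have hcont2 : Continuous (Function.uncurry
        (fun ω φ : ℝ => Real.sin (ω * t) * Real.cos (ω * (x * Real.sin φ)))) := by
      apply Continuous.mul
      · fun_prop
      · fun_prop
    rw [swap_gen hcont2 hA hπ.le]
    have h2 : Set.EqOn (fun φ => ∫ ω in (0:ℝ)..A, Real.sin (ω * t) * Real.cos (ω * (x * Real.sin φ)))
        (fun φ => t / (t ^ 2 - (x * Real.sin φ) ^ 2)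
          - (1/2) * (Real.cos (A * (t + x * Real.sin φ)) / (t + x * Real.sin φ))
          - (1/2) * (Real.cos (A * (t + -x * Real.sin φ)) / (t + -x * Real.sin φ)))
        (Set.uIcc (0:ℝ) Real.pi) := by
      intro φ _
      have habs2 : |x * Real.sin φ| < t := by
        rw [abs_mul, abs_of_pos hx]
        nlinarith [Real.abs_sin_le_one φ, abs_nonneg (Real.sin φ)]
      have h3 := inner_int t (x * Real.sin φ) A habs2
      simp only []
      rw [h3, show t + -x * Real.sin φ = t - x * Real.sin φ by ring]
    rw [intervalIntegral.integral_congr h2]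
    have hif1 : IntervalIntegrable (fun φ => t / (t ^ 2 - (x * Real.sin φ) ^ 2))
        volume 0 Real.pi := by
      apply Continuous.intervalIntegrable
      exact continuous_const.div (by fun_prop) (fun φ => (hsq_bd φ).ne')
    have hif2 : IntervalIntegrable (fun φ => (1/2) * (Real.cos (A * (t + x * Real.sin φ)) /
        (t + x * Real.sin φ))) volume 0 Real.pi := by
      apply Continuous.intervalIntegrable
      exact continuous_const.mul ((by fun_prop : Continuous fun φ : ℝ =>
        Real.cos (A * (t + x * Real.sin φ))).div (by fun_prop)
        (fun φ => (hsin_bd x φ hxabs).ne'))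
    have hif3 : IntervalIntegrable (fun φ => (1/2) * (Real.cos (A * (t + -x * Real.sin φ)) /
        (t + -x * Real.sin φ))) volume 0 Real.pi := by
      apply Continuous.intervalIntegrable
      exact continuous_const.mul ((by fun_prop : Continuous fun φ : ℝ =>
        Real.cos (A * (t + -x * Real.sin φ))).div (by fun_prop)
        (fun φ => (hsin_bd (-x) φ hnxabs).ne'))
    rw [intervalIntegral.integral_sub (hif1.sub hif2) hif3,
      intervalIntegral.integral_sub hif1 hif2,
      intervalIntegral.integral_const_mul, intervalIntegral.integral_const_mul,
      phi_int t x hx hxt]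
  have hosc1 := osc_tendsto t x hx.ne' hxabs
  have hosc2 := osc_tendsto t (-x) (neg_ne_zero.mpr hx.ne') hnxabs
  have hlim : Tendsto (fun A : ℝ => (1 / Real.pi) * (Real.pi / c - (1/2) * R1 A - (1/2) * R2 A))
      atTop (nhds ((1 / Real.pi) * (Real.pi / c - (1/2) * 0 - (1/2) * 0))) := by
    apply Tendsto.const_mul
    apply Tendsto.sub
    apply Tendsto.sub tendsto_const_nhds
    · exact hosc1.const_mul _
    · exact hosc2.const_mul _
  have hval : (1 / Real.pi) * (Real.pi / c - (1/2) * 0 - (1/2) * 0) = 1 / c := by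
    field_simp
    ring
  rw [hval] at hlim
  apply hlim.congr'
  filter_upwards [eventually_ge_atTop (0:ℝ)] with A hA
  exact (hkey A hA).symm

end Main
end
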